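/- arXiv:1511.07832 — 4 statements merged into one kernel-verified Lean document; each statement's English description precedes it below -/
import Mathlib

section
/- Let X be a finite subset of S^1 and 0 < r ≤ 1, with f_r : X → X defined as above. Then all periodic orbits of f_r have the same length ℓ and the same winding number w. -/
noncomputable section

instance : Fact ((0:ℝ) < 1) := ⟨zero_lt_one⟩

/-- Clockwise distance on the circle `S¹ = ℝ/ℤ`: the representative of `y - x` in `[0,1)`. -/
noncomputable def cdist (x y : AddCircle (1:ℝ)) : ℝ :=
  ((AddCircle.equivIco 1 0) (y - x)).1

/-- `f` is the cyclic dynamical system map `f_r` on the finite set `X`. -/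
def IsCyclicMap (X : Finset (AddCircle (1:ℝ))) (r : ℝ)
    (f : AddCircle (1:ℝ) → AddCircle (1:ℝ)) : Prop :=
  ∀ x ∈ X, f x ∈ X ∧ cdist x (f x) < r ∧
    ∀ y ∈ X, cdist x y < r → cdist x y ≤ cdist x (f x)

/-- The winding number of the periodic orbit through `x`, of length `ℓ`:
`Σ_{i=0}^{ℓ-1} d⃗(f^i x, f^{i+1} x)`. -/
noncomputable def winding (f : AddCircle (1:ℝ) → AddCircle (1:ℝ))
    (x : AddCircle (1:ℝ)) (ℓ : ℕ) : ℝ :=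
  ∑ i ∈ Finset.range ℓ, cdist (f^[i] x) (f^[i+1] x)

lemma cdist_mem (x y : AddCircle (1:ℝ)) : cdist x y ∈ Set.Ico (0:ℝ) 1 := by
  have := ((AddCircle.equivIco 1 0) (y - x)).2
  unfold cdist
  simpa using this

lemma cdist_nonneg (x y : AddCircle (1:ℝ)) : 0 ≤ cdist x y := (cdist_mem x y).1
lemma cdist_lt_one (x y : AddCircle (1:ℝ)) : cdist x y < 1 := (cdist_mem x y).2

lemma coe_cdist (x y : AddCircle (1:ℝ)) : ((cdist x y : ℝ) : AddCircle (1:ℝ)) = y - x := by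
  have := (AddCircle.equivIco 1 0).symm_apply_apply (y - x)
  rw [← this]; rfl

lemma exists_int_of_coe_zero {s : ℝ} (h : (s : AddCircle (1:ℝ)) = 0) : ∃ m : ℤ, s = m := by
  rw [AddCircle.coe_eq_zero_iff] at h
  obtain ⟨m, hm⟩ := h
  exact ⟨m, by simpa using hm.symm⟩

lemma int_eq_zero_of {s : ℝ} (h : (s : AddCircle (1:ℝ)) = 0) (h1 : -1 < s) (h2 : s < 1) :
    s = 0 := by
  obtain ⟨m, rfl⟩ := exists_int_of_coe_zero h
  have g1 : (-1:ℤ) < m := by exact_mod_cast h1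
  have g2 : m < 1 := by exact_mod_cast h2
  have : m = 0 := by omega
  simp [this]

lemma cdist_self (a : AddCircle (1:ℝ)) : cdist a a = 0 := by
  apply int_eq_zero_of
  · rw [coe_cdist]; abel
  · linarith [cdist_nonneg a a]
  · exact cdist_lt_one a a

lemma cdist_eq_zero_iff {a b : AddCircle (1:ℝ)} : cdist a b = 0 ↔ a = b := by
  constructor
  · intro h
    have h2 := coe_cdist a b
    rw [h] at h2
    have : (0 : AddCircle (1:ℝ)) = b - a := by
      rw [← h2]; norm_num
    have : b - a = 0 := this.symm
    have := sub_eq_zero.mp this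
    exact this.symm
  · rintro rfl; exact cdist_self a

lemma cdist_sub {a b c : AddCircle (1:ℝ)} (h : cdist a b ≤ cdist a c) :
    cdist b c = cdist a c - cdist a b := by
  have h0 : ((cdist b c - (cdist a c - cdist a b) : ℝ) : AddCircle (1:ℝ)) = 0 := by
    rw [AddCircle.coe_sub, AddCircle.coe_sub, coe_cdist, coe_cdist, coe_cdist]
    abel
  have := int_eq_zero_of h0 (by
      have := cdist_nonneg b c
      have := cdist_lt_one a c
      have := cdist_nonneg a b
      linarith)
    (by
      have := cdist_lt_one b c
      have := cdist_nonneg a c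
      linarith)
  linarith

lemma cdist_wrap {a b : AddCircle (1:ℝ)} (h : a ≠ b) : cdist a b + cdist b a = 1 := by
  have h0 : ((cdist a b + cdist b a - 1 : ℝ) : AddCircle (1:ℝ)) = 0 := by
    rw [AddCircle.coe_sub, AddCircle.coe_add, coe_cdist, coe_cdist]
    have : ((1:ℝ) : AddCircle (1:ℝ)) = 0 := by
      rw [AddCircle.coe_eq_zero_iff]; exact ⟨1, by norm_num⟩
    rw [this]; abel
  have hab : 0 < cdist a b := lt_of_le_of_ne (cdist_nonneg a b)
    (fun hc => h (cdist_eq_zero_iff.mp hc.symm))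
  have hba : 0 < cdist b a := lt_of_le_of_ne (cdist_nonneg b a)
    (fun hc => h.symm (cdist_eq_zero_iff.mp hc.symm))
  have := int_eq_zero_of h0
    (by linarith)
    (by have := cdist_lt_one a b; have := cdist_lt_one b a; linarith)
  linarith

variable {X : Finset (AddCircle (1:ℝ))} {r : ℝ} {f : AddCircle (1:ℝ) → AddCircle (1:ℝ)}

lemma eq_of_cdist_eq {x a b : AddCircle (1:ℝ)} (h : cdist x a = cdist x b) : a = b := by
  have h1 := coe_cdist x a
  have h2 := coe_cdist x b
  rw [h] at h1
  have : a - x = b - x := h1.symm.trans h2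
  have := sub_left_injective this
  exact this

lemma step_lemma (hf : IsCyclicMap X r f) {a b : AddCircle (1:ℝ)} (ha : a ∈ X) (hb : b ∈ X)
    (h : cdist a b ≤ cdist a (f a)) : cdist b (f a) ≤ cdist b (f b) := by
  have hsub := cdist_sub h
  obtain ⟨hfa, hfar, -⟩ := hf a ha
  obtain ⟨-, -, hmax⟩ := hf b hb
  apply hmax (f a) hfa
  rw [hsub]
  have := cdist_nonneg a b
  linarith

lemma iter_mem (hf : IsCyclicMap X r f) {x : AddCircle (1:ℝ)} (hx : x ∈ X) (t : ℕ) :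
    f^[t] x ∈ X := by
  induction t with
  | zero => simpa using hx
  | succ n ih => rw [Function.iterate_succ_apply']; exact (hf _ ih).1

lemma coe_sum_cdist {w : AddCircle (1:ℝ)} (m : ℕ) :
    ((∑ t ∈ Finset.range m, cdist (f^[t] w) (f^[t+1] w) : ℝ) : AddCircle (1:ℝ))
      = f^[m] w - w := by
  induction m with
  | zero => simp
  | succ n ih =>
      rw [Finset.sum_range_succ, AddCircle.coe_add, ih, coe_cdist]
      abel

lemma sum_cdist_int {w : AddCircle (1:ℝ)} {m : ℕ} (hm : f^[m] w = w) :
    ∃ c : ℤ, (∑ t ∈ Finset.range m, cdist (f^[t] w) (f^[t+1] w) : ℝ) = c := by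
  apply exists_int_of_coe_zero
  rw [coe_sum_cdist, hm, sub_self]

lemma iterate_mul_fix {w : AddCircle (1:ℝ)} {ℓ : ℕ} (hm : f^[ℓ] w = w) (k : ℕ) :
    f^[k * ℓ] w = w := by
  induction k with
  | zero => simp
  | succ n ih =>
      rw [Nat.succ_mul, Function.iterate_add_apply, hm, ih]

lemma fixed_iter {z : AddCircle (1:ℝ)} (hz : f z = z) (s : ℕ) : f^[s] z = z := by
  induction s with
  | zero => rfl
  | succ n ih => rw [Function.iterate_succ_apply', ih, hz]

lemma fixed_propagates (hf : IsCyclicMap X r f) {z w : AddCircle (1:ℝ)}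
    (hz : z ∈ X) (hfz : f z = z) (hw : w ∈ X)
    (hper : ∃ i, 1 ≤ i ∧ f^[i] w = w) : f w = w := by
  by_contra hne
  obtain ⟨ℓ, hℓ1, hℓ⟩ := hper
  set S := (∑ t ∈ Finset.range ℓ, cdist (f^[t] w) (f^[t+1] w) : ℝ) with hSdef
  have hS1 : 1 ≤ S := by
    obtain ⟨c, hc⟩ := sum_cdist_int hℓ
    have hpos : 0 < S := by
      have : 0 < cdist (f^[0] w) (f^[0+1] w) := by
        simp only [Function.iterate_zero_apply, zero_add, Function.iterate_one]
        rcases lt_or_eq_of_le (cdist_nonneg w (f w)) with h | h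
        · exact h
        · exact absurd (cdist_eq_zero_iff.mp h.symm) (fun he => hne he.symm)
      have hle : cdist (f^[0] w) (f^[0+1] w) ≤ S := by
        apply Finset.single_le_sum (f := fun t => cdist (f^[t] w) (f^[t+1] w))
        · intro i _; exact cdist_nonneg _ _
        · exact Finset.mem_range.mpr hℓ1
      linarith
    have hc' : (1:ℤ) ≤ c := by
      have : (0:ℝ) < (c:ℝ) := by rw [← hc]; exact hpos
      exact_mod_cast this
    rw [hSdef, hc]
    exact_mod_cast hc'
  by_cases hcase : ∃ t, cdist (f^[t] w) z ≤ cdist (f^[t] w) (f (f^[t] w))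
  · obtain ⟨t, ht⟩ := hcase
    have hstep := step_lemma hf (iter_mem hf hw t) hz ht
    rw [hfz, cdist_self] at hstep
    have h0 : cdist z (f (f^[t] w)) = 0 :=
      le_antisymm hstep (cdist_nonneg _ _)
    have hzw : z = f^[t+1] w := by
      rw [Function.iterate_succ_apply']
      exact cdist_eq_zero_iff.mp h0
    have hkl : f^[(t+1) * ℓ] w = w := iterate_mul_fix hℓ (t+1)
    have hge : t + 1 ≤ (t+1) * ℓ := Nat.le_mul_of_pos_right _ hℓ1
    obtain ⟨s, hs⟩ := Nat.exists_eq_add_of_le hge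
    have : w = z := by
      have h2 : f^[s + (t+1)] w = f^[s] (f^[t+1] w) := Function.iterate_add_apply f s (t+1) w
      rw [← hzw, fixed_iter hfz] at h2
      have he : (t+1) * ℓ = s + (t+1) := by omega
      rw [← h2, ← he, hkl]
    exact hne (by rw [this, hfz])
  · push_neg at hcase
    have key : ∀ T, cdist (f^[T] w) z
        = cdist w z - (∑ t ∈ Finset.range T, cdist (f^[t] w) (f^[t+1] w) : ℝ) := by
      intro T
      induction T with
      | zero => simp
      | succ n ih =>
          have hlt := le_of_lt (hcase n)
          have hb : f^[n+1] w = f (f^[n] w) := Function.iterate_succ_apply' f n w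
          have := cdist_sub (a := f^[n] w) (b := f^[n+1] w) (c := z) (by rw [hb]; exact hlt)
          rw [Finset.sum_range_succ, this, ih]
          ring
    have hT := key ℓ
    rw [hℓ] at hT
    have := cdist_nonneg w z
    -- cdist w z = cdist w z - S, so S = 0, contra S ≥ 1
    rw [← hSdef] at hT
    linarith

lemma main_rotation {X : Finset (AddCircle (1:ℝ))} {r : ℝ}
    {f : AddCircle (1:ℝ) → AddCircle (1:ℝ)} (hf : IsCyclicMap X r f)
    (P : Finset (AddCircle (1:ℝ)))
    (hPX : ∀ q ∈ P, q ∈ X)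
    (hPf : ∀ q ∈ P, f q ∈ P)
    (hPper : ∀ q ∈ P, ∃ m, 1 ≤ m ∧ f^[m] q = q)
    (hnofix : ∀ q ∈ P, f q ≠ q)
    {x : AddCircle (1:ℝ)} (hx : x ∈ P) :
    ∃ (n kk : ℕ) (p : ℕ → AddCircle (1:ℝ)),
      (∀ q ∈ P, ∃ j, j < n ∧ p j = q) ∧
      (∀ j m, f^[m] (p j) = p j ↔ n ∣ m * kk) ∧
      (∀ j m, n ∣ m * kk → winding f (p j) m = ((m * kk) / n : ℕ)) := by
  classical
  set n := P.card with hn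
  have hn0 : 0 < n := Finset.card_pos.mpr ⟨x, hx⟩
  -- injectivity of f on P
  have hinj : ∀ a ∈ P, ∀ b ∈ P, f a = f b → a = b := by
    intro a ha b hb hab
    obtain ⟨ma, hma1, hma⟩ := hPper a ha
    obtain ⟨mb, hmb1, hmb⟩ := hPper b hb
    have hMa : f^[mb * ma] a = a := iterate_mul_fix hma mb
    have hMb : f^[ma * mb] b = b := iterate_mul_fix hmb ma
    have hM1 : 1 ≤ ma * mb := Nat.one_le_iff_ne_zero.mpr (by positivity)
    have key : ∀ (w : AddCircle (1:ℝ)), f^[ma * mb] w = w → w = f^[ma * mb - 1] (f w) := by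
      intro w hw
      calc w = f^[ma * mb] w := hw.symm
        _ = f^[ma * mb - 1 + 1] w := by rw [show ma * mb - 1 + 1 = ma * mb by omega]
        _ = f^[ma * mb - 1] (f w) := Function.iterate_succ_apply f _ w
    rw [Nat.mul_comm] at hMa
    rw [key a hMa, key b hMb, hab]
  -- sorted values
  set T := P.image (fun q => cdist x q) with hT
  have hTcard : T.card = n := Finset.card_image_of_injective _ (fun a b h => eq_of_cdist_eq h)
  set L := T.sort (· ≤ ·) with hL
  have hLlen : L.length = n := by rw [hL, Finset.length_sort, hTcard]
  set v : ℕ → ℝ := fun j => L.getD (j % n) 0 with hv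
  have hveq : ∀ i j : ℕ, i % n = j % n → v i = v j := by
    intro i j h; simp only [hv, h]
  have hvget : ∀ j : ℕ, ∃ h : j % n < L.length, v j = L[j % n] := by
    intro j
    refine ⟨by rw [hLlen]; exact Nat.mod_lt _ hn0, ?_⟩
    exact List.getD_eq_getElem _ _ _
  have hvmem : ∀ j : ℕ, v j ∈ T := by
    intro j
    obtain ⟨h, hj⟩ := hvget j
    rw [hj]
    exact (Finset.mem_sort (· ≤ ·)).mp (List.getElem_mem h)
  have hvmono : ∀ i j : ℕ, i < j → j < n → v i < v j := by
    intro i j hij hjn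
    obtain ⟨hi', hi⟩ := hvget i
    obtain ⟨hj', hj⟩ := hvget j
    rw [hi, hj]
    have hii : i % n = i := Nat.mod_eq_of_lt (lt_trans hij hjn)
    have hjj : j % n = j := Nat.mod_eq_of_lt hjn
    have : (⟨i % n, hi'⟩ : Fin L.length) < ⟨j % n, hj'⟩ := by
      simp only [Fin.mk_lt_mk, hii, hjj]; exact hij
    have := (List.sortedLT_iff_strictMono_get.mp (Finset.sortedLT_sort T)) this
    simpa using this
  have hvsurj : ∀ t ∈ T, ∃ j, j < n ∧ v j = t := by
    intro t ht
    have : t ∈ L := (Finset.mem_sort _).mpr ht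
    obtain ⟨j, hj, hjt⟩ := List.mem_iff_getElem.mp this
    refine ⟨j, by rw [← hLlen]; exact hj, ?_⟩
    obtain ⟨h', he⟩ := hvget j
    rw [he, ← hjt]
    congr 1
    exact Nat.mod_eq_of_lt (by rw [← hLlen]; exact hj)
  have hvbounds : ∀ j : ℕ, 0 ≤ v j ∧ v j < 1 := by
    intro j
    have := hvmem j
    rw [hT] at this
    obtain ⟨q, hq, hqe⟩ := Finset.mem_image.mp this
    rw [← hqe]
    exact ⟨cdist_nonneg x q, cdist_lt_one x q⟩
  -- the points
  set p : ℕ → AddCircle (1:ℝ) := fun j => x + ((v j : ℝ) : AddCircle (1:ℝ)) with hp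
  have hpchar : ∀ (j : ℕ) (q : AddCircle (1:ℝ)), cdist x q = v j → p j = q := by
    intro j q hq
    have := coe_cdist x q
    rw [hq] at this
    simp only [hp]
    rw [this]
    abel
  have hpmemv : ∀ j : ℕ, p j ∈ P ∧ cdist x (p j) = v j := by
    intro j
    have := hvmem j
    rw [hT] at this
    obtain ⟨q, hq, hqe⟩ := Finset.mem_image.mp this
    have := hpchar j q hqe
    rw [this]
    exact ⟨hq, hqe⟩
  have hpmem : ∀ j : ℕ, p j ∈ P := fun j => (hpmemv j).1
  have hpv : ∀ j : ℕ, cdist x (p j) = v j := fun j => (hpmemv j).2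
  have hpeqmod : ∀ i j : ℕ, i % n = j % n → p i = p j := by
    intro i j h
    simp only [hp, hveq i j h]
  have hpinj : ∀ i j : ℕ, p i = p j → i % n = j % n := by
    intro i j h
    have hvij : v i = v j := by rw [← hpv i, ← hpv j, h]
    have h1 : v (i % n) = v i := hveq _ _ (Nat.mod_mod_of_dvd i dvd_rfl)
    have h2 : v (j % n) = v j := hveq _ _ (Nat.mod_mod_of_dvd j dvd_rfl)
    have hvij' : v (i % n) = v (j % n) := by rw [h1, h2]; exact hvij
    rcases Nat.lt_trichotomy (i % n) (j % n) with h' | h' | h'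
    · exact absurd hvij' (ne_of_lt (hvmono _ _ h' (Nat.mod_lt _ hn0)))
    · exact h'
    · exact absurd hvij'.symm (ne_of_lt (hvmono _ _ h' (Nat.mod_lt _ hn0)))
  have hPsurj : ∀ q ∈ P, ∃ j, j < n ∧ p j = q := by
    intro q hq
    have : cdist x q ∈ T := by rw [hT]; exact Finset.mem_image_of_mem _ hq
    obtain ⟨j, hj, hje⟩ := hvsurj _ this
    exact ⟨j, hj, hpchar j q hje.symm⟩
  -- cdist formulas between points
  have F1 : ∀ a b : ℕ, a ≤ b → b < n → cdist (p a) (p b) = v b - v a := by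
    intro a b hab hbn
    have hva : v a ≤ v b := by
      rcases Nat.lt_or_ge a b with h | h
      · exact le_of_lt (hvmono a b h hbn)
      · have : a = b := le_antisymm hab h
        rw [this]
    have := cdist_sub (a := x) (b := p a) (c := p b) (by rw [hpv, hpv]; exact hva)
    rw [this, hpv, hpv]
  have F2 : ∀ a b : ℕ, b < a → a < n → cdist (p a) (p b) = v b - v a + 1 := by
    intro a b hba han
    have h1 : cdist (p b) (p a) = v a - v b := F1 b a (le_of_lt hba) han
    have hne : p a ≠ p b := by
      intro h
      have := hpinj a b h
      rw [Nat.mod_eq_of_lt han, Nat.mod_eq_of_lt (lt_trans hba han)] at this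
      omega
    have := cdist_wrap hne
    linarith
  have F3 : ∀ a s : ℕ, a < n → s < n →
      cdist (p a) (p (a + s)) = if a + s < n then v (a + s) - v a else v (a + s - n) - v a + 1 := by
    intro a s han hsn
    by_cases h : a + s < n
    · rw [if_pos h]
      exact F1 a (a + s) (Nat.le_add_right a s) h
    · rw [if_neg h]
      push_neg at h
      have hb : a + s - n < a := by omega
      have hps : p (a + s) = p (a + s - n) := by
        apply hpeqmod
        have h2 : a + s = (a + s - n) + n := by omega
        conv_lhs => rw [h2]
        rw [Nat.add_mod_right]
      rw [hps]
      exact F2 a (a + s - n) hb han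
  have F4s : ∀ a s t : ℕ, a < n → s < t → t < n →
      cdist (p a) (p (a + s)) < cdist (p a) (p (a + t)) := by
    intro a s t han hst htn
    rw [F3 a s han (lt_trans hst htn), F3 a t han htn]
    by_cases h1 : a + s < n
    · by_cases h2 : a + t < n
      · rw [if_pos h1, if_pos h2]
        have := hvmono (a + s) (a + t) (by omega) h2
        linarith
      · rw [if_pos h1, if_neg h2]
        have hb1 := (hvbounds (a + s)).2
        have hb2 := (hvbounds (a + t - n)).1
        linarith
    · rw [if_neg h1, if_neg (by omega : ¬ a + t < n)]
      have := hvmono (a + s - n) (a + t - n) (by omega) (by omega)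
      linarith
  have F5 : ∀ a s t : ℕ, a < n → s < n → t < n →
      cdist (p a) (p (a + s)) ≤ cdist (p a) (p (a + t)) → s ≤ t := by
    intro a s t han hsn htn hle
    by_contra h
    push_neg at h
    have := F4s a t s han h hsn
    linarith
  -- existence of the step offset
  have hn2 : 2 ≤ n := by
    obtain ⟨q, hq⟩ := Finset.card_pos.mp hn0
    obtain ⟨j0, hj0, hj0e⟩ := hPsurj q hq
    obtain ⟨j1, hj1, hj1e⟩ := hPsurj (f q) (hPf q hq)
    have hne : j0 % n ≠ j1 % n := by
      intro h
      have : p j0 = p j1 := hpeqmod _ _ h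
      rw [hj0e, hj1e] at this
      exact hnofix q hq this.symm
    rcases Nat.lt_or_ge n 2 with h | h
    · exfalso
      apply hne
      have hn1 : n = 1 := by omega
      rw [hn1]
      omega
    · exact h
  have hkex : ∀ j, j < n → ∃ k, 1 ≤ k ∧ k < n ∧ f (p j) = p (j + k) := by
    intro j hj
    obtain ⟨m, hm, hme⟩ := hPsurj (f (p j)) (hPf _ (hpmem j))
    have hmj : m ≠ j := by
      intro h
      rw [h] at hme
      exact hnofix _ (hpmem j) hme.symm
    rcases Nat.lt_or_ge j m with h | h
    · exact ⟨m - j, by omega, by omega, by rw [show j + (m - j) = m by omega]; exact hme.symm⟩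
    · refine ⟨m + n - j, by omega, by omega, ?_⟩
      have : p (j + (m + n - j)) = p m := by
        apply hpeqmod
        have h2 : j + (m + n - j) = m + n := by omega
        rw [h2, Nat.add_mod_right]
      rw [this]
      exact hme.symm
  have hkch := fun j => hkex (j % n) (Nat.mod_lt _ hn0)
  choose K hK1 hKn hKf using hkch
  -- K is well-defined mod n
  have hKuniq : ∀ (a : ℕ) (k k' : ℕ), 1 ≤ k → k < n → 1 ≤ k' → k' < n →
      p (a + k) = p (a + k') → k = k' := by
    intro a k k' h1 h2 h3 h4 he
    have := hpinj _ _ he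
    have hmod : k % n = k' % n := Nat.ModEq.add_left_cancel' a this
    rw [Nat.mod_eq_of_lt h2, Nat.mod_eq_of_lt h4] at hmod
    exact hmod
  have hfp : ∀ j, f (p j) = p (j + K j) := by
    intro j
    have h1 : p j = p (j % n) := hpeqmod _ _ (Nat.mod_mod_of_dvd j dvd_rfl).symm
    have h2 : p (j % n + K j) = p (j + K j) := by
      apply hpeqmod
      exact Nat.ModEq.add_right _ (Nat.mod_modEq j n)
    rw [h1, hKf j, h2]
  have hKeqmod : ∀ i j, i % n = j % n → K i = K j := by
    intro i j h
    apply hKuniq (i % n) _ _ (hK1 i) (hKn i) (hK1 j) (hKn j)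
    have e1 : p (i % n + K i) = p (i + K i) := hpeqmod _ _ (Nat.ModEq.add_right _ (Nat.mod_modEq i n))
    have e2 : p (i % n + K j) = p (j + K j) := by
      apply hpeqmod
      apply Nat.ModEq.add_right
      calc i % n ≡ i [MOD n] := Nat.mod_modEq i n
        _ ≡ j [MOD n] := h
    rw [e1, e2, ← hfp i, ← hfp j]
    congr 1
    exact hpeqmod _ _ h
  -- the chain inequality: K is nondecreasing
  have hchain : ∀ a, a < n → K a ≤ K (a + 1) := by
    intro a han
    set k := K a with hkdef
    set k1 := K (a + 1) with hk1def
    have hfa : f (p a) = p (a + k) := hfp a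
    have hfa1 : f (p (a + 1)) = p (a + 1 + k1) := hfp (a + 1)
    have hhyp : cdist (p a) (p (a + 1)) ≤ cdist (p a) (f (p a)) := by
      rw [hfa]
      rcases Nat.lt_or_ge 1 k with h | h
      · exact le_of_lt (F4s a 1 k han h (hKn a))
      · have : k = 1 := by have := hK1 a; omega
        rw [this]
    have hstep := step_lemma hf (hPX _ (hpmem a)) (hPX _ (hpmem (a + 1))) hhyp
    rw [hfa, hfa1] at hstep
    set b := (a + 1) % n with hbdef
    have hbn : b < n := Nat.mod_lt _ hn0
    have e1 : p (a + 1) = p b := hpeqmod _ _ (Nat.mod_modEq (a+1) n).symm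
    have e2 : p (a + k) = p (b + (k - 1)) := by
      apply hpeqmod
      have h1 : a + k = (a + 1) + (k - 1) := by have := hK1 a; omega
      rw [h1]
      exact Nat.ModEq.add_right _ (Nat.mod_modEq (a+1) n).symm
    have e3 : p (a + 1 + k1) = p (b + k1) := by
      apply hpeqmod
      exact Nat.ModEq.add_right _ (Nat.mod_modEq (a+1) n).symm
    rw [e1, e2, e3] at hstep
    have hle : k - 1 ≤ k1 := F5 b (k - 1) k1 hbn (by have := hKn a; omega) (hKn (a+1)) hstep
    rcases Nat.lt_or_ge (k - 1) k1 with h | h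
    · have := hK1 a; omega
    · exfalso
      have hkk : k1 = k - 1 := by omega
      have heq : f (p (a + 1)) = f (p a) := by
        rw [hfa, hfa1, hkk]
        apply hpeqmod
        have : a + 1 + (k - 1) = a + k := by have := hK1 a; omega
        rw [this]
      have := hinj _ (hpmem (a+1)) _ (hpmem a) heq
      have hmod := hpinj _ _ this
      rw [Nat.mod_eq_of_lt han] at hmod
      rcases Nat.lt_or_ge (a + 1) n with h2 | h2
      · rw [Nat.mod_eq_of_lt h2] at hmod; omega
      · have : a + 1 = n := by omega
        rw [this, Nat.mod_self] at hmod
        omega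
  have hchain' : ∀ j : ℕ, K j ≤ K (j + 1) := by
    intro j
    have h1 : K j = K (j % n) := hKeqmod _ _ (Nat.mod_mod_of_dvd j dvd_rfl).symm
    have h2 : K (j % n + 1) = K (j + 1) := by
      apply hKeqmod
      exact Nat.ModEq.add_right 1 (Nat.mod_modEq j n)
    rw [h1, ← h2]
    exact hchain _ (Nat.mod_lt _ hn0)
  have hKmono : ∀ i j : ℕ, i ≤ j → K i ≤ K j := by
    intro i j hij
    induction j with
    | zero => simp [Nat.le_zero.mp hij]
    | succ m ih =>
        rcases Nat.lt_or_ge i (m + 1) with h | h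
        · exact le_trans (ih (by omega)) (hchain' m)
        · have : i = m + 1 := by omega
          rw [this]
  have hKconst : ∀ j : ℕ, K j = K 0 := by
    intro j
    apply le_antisymm
    · have h1 : K j ≤ K (j * n) := hKmono _ _ (by nlinarith)
      have h2 : K (j * n) = K 0 := by
        apply hKeqmod
        simp [Nat.mul_mod_left]
      omega
    · exact hKmono 0 j (Nat.zero_le j)
  set kk := K 0 with hkk
  have hfpk : ∀ j, f (p j) = p (j + kk) := by
    intro j
    rw [hfp j, hKconst j]
  have hiter : ∀ (m : ℕ) (j : ℕ), f^[m] (p j) = p (j + m * kk) := by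
    intro m
    induction m with
    | zero => intro j; simp
    | succ mm ih =>
        intro j
        rw [Function.iterate_succ_apply, hfpk j, ih (j + kk)]
        congr 1
        ring
  have hkk1 : 1 ≤ kk := hK1 0
  have hkkn : kk < n := hKn 0
  have hperiodic : ∀ (j m : ℕ), f^[m] (p j) = p j ↔ n ∣ m * kk := by
    intro j m
    rw [hiter m j]
    constructor
    · intro h
      have h1 := hpinj _ _ h
      have h2 : j + m * kk ≡ j + 0 [MOD n] := h1
      have h3 : m * kk ≡ 0 [MOD n] := Nat.ModEq.add_left_cancel' j h2
      exact (Nat.modEq_zero_iff_dvd).mp h3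
    · intro h
      apply hpeqmod
      have h2 : m * kk ≡ 0 [MOD n] := (Nat.modEq_zero_iff_dvd).mpr h
      have h3 : j + m * kk ≡ j + 0 [MOD n] := Nat.ModEq.add_left j h2
      exact h3
  have hwind : ∀ (j m : ℕ), n ∣ m * kk → winding f (p j) m = ((m * kk) / n : ℕ) := by
    intro j m hdvd
    obtain ⟨c, hc⟩ := hdvd
    set G : ℕ → ℝ := fun t => v ((j + t * kk) % n) + (((j % n + t * kk) / n : ℕ) : ℝ) with hG
    have hterm : ∀ t : ℕ, cdist (f^[t] (p j)) (f^[t+1] (p j)) = G (t+1) - G t := by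
      intro t
      rw [hiter t j, hiter (t+1) j]
      set a' := (j + t * kk) % n with ha'
      have ha'n : a' < n := Nat.mod_lt _ hn0
      have e1 : p (j + t * kk) = p a' := hpeqmod _ _ (Nat.mod_modEq _ n).symm
      have e2 : p (j + (t+1) * kk) = p (a' + kk) := by
        apply hpeqmod
        have h1 : j + (t+1) * kk = (j + t * kk) + kk := by ring
        rw [h1]
        exact Nat.ModEq.add_right _ (Nat.mod_modEq _ n).symm
      rw [e1, e2, F3 a' kk ha'n hkkn]
      set N := j % n + t * kk with hN
      have hNmod : N % n = a' := by
        show N % n = (j + t * kk) % n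
        exact Nat.ModEq.add_right _ (Nat.mod_modEq j n)
      have hNdm : n * (N / n) + a' = N := by
        conv_rhs => rw [← Nat.div_add_mod N n]
        rw [hNmod]
      have hA1 : (j + (t+1) * kk) % n = (a' + kk) % n := by
        have h1 : j + (t+1) * kk = (j + t * kk) + kk := by ring
        rw [h1]
        exact Nat.ModEq.add_right _ (Nat.mod_modEq _ n).symm
      have hvpart : v ((j + (t+1) * kk) % n) = v ((a' + kk) % n) := by
        apply hveq
        rw [Nat.mod_mod_of_dvd _ dvd_rfl, Nat.mod_mod_of_dvd _ dvd_rfl, hA1]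
      have hNnext : j % n + (t+1) * kk = N + kk := by rw [hN]; ring
      by_cases hcase : a' + kk < n
      · rw [if_pos hcase]
        have hm1 : (a' + kk) % n = a' + kk := Nat.mod_eq_of_lt hcase
        have hd1 : (N + kk) / n = N / n := by
          have h1 : N + kk = n * (N / n) + (a' + kk) := by omega
          rw [h1, Nat.mul_add_div hn0, Nat.div_eq_of_lt hcase]
          omega
        simp only [hG]
        rw [hvpart, hm1, hNnext, hd1]
        have hvG : v ((j + t * kk) % n) = v a' := by rw [← ha']
        rw [hvG]
        ring
      · rw [if_neg hcase]
        push_neg at hcase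
        have hm1 : (a' + kk) % n = a' + kk - n := by
          have h1 : a' + kk - n < n := by omega
          have h2 : a' + kk = (a' + kk - n) + n := by omega
          conv_lhs => rw [h2]
          rw [Nat.add_mod_right]
          exact Nat.mod_eq_of_lt h1
        have hd1 : (N + kk) / n = N / n + 1 := by
          have h1 : N + kk = n * (N / n + 1) + (a' + kk - n) := by
            have := hNdm
            have h3 : n * (N / n + 1) = n * (N / n) + n := by ring
            omega
          rw [h1, Nat.mul_add_div hn0,
            Nat.div_eq_of_lt (show a' + kk - n < n by omega)]
        simp only [hG]
        rw [hvpart, hm1, hNnext, hd1]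
        have hvG : v ((j + t * kk) % n) = v a' := by rw [← ha']
        rw [hvG]
        push_cast
        ring
    have hsum : winding f (p j) m = G m - G 0 := by
      show (∑ i ∈ Finset.range m, cdist (f^[i] (p j)) (f^[i+1] (p j))) = G m - G 0
      rw [Finset.sum_congr rfl (fun t _ => hterm t)]
      exact Finset.sum_range_sub G m
    have hjmod : (j + m * kk) % n = j % n := by
      have h2 : m * kk ≡ 0 [MOD n] := (Nat.modEq_zero_iff_dvd).mpr ⟨c, hc⟩
      have h3 : j + m * kk ≡ j + 0 [MOD n] := Nat.ModEq.add_left j h2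
      exact h3
    have hvm : v ((j + m * kk) % n) = v (j % n) := by
      apply hveq
      rw [Nat.mod_mod_of_dvd _ dvd_rfl, Nat.mod_mod_of_dvd _ dvd_rfl, hjmod]
    have hdiv : (j % n + m * kk) / n = c := by
      rw [hc, Nat.add_mul_div_left _ _ hn0, Nat.div_eq_of_lt (Nat.mod_lt _ hn0)]
      omega
    have hGm : G m = v (j % n) + (c : ℝ) := by
      simp only [hG]
      rw [hvm, hdiv]
    have hG0 : G 0 = v (j % n) := by
      have h0 : (j % n + 0 * kk) / n = 0 := by
        simp [Nat.div_eq_of_lt (Nat.mod_lt j hn0)]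
      have hv0 : v ((j + 0 * kk) % n) = v (j % n) := by
        apply hveq
        simp [Nat.mod_mod_of_dvd _ dvd_rfl]
      simp only [hG]
      rw [hv0, h0]
      simp
    have hcval : ((m * kk) / n : ℕ) = c := by
      rw [hc]
      exact Nat.mul_div_cancel_left c hn0
    rw [hsum, hGm, hG0, hcval]
    ring
  exact ⟨n, kk, p, hPsurj, hperiodic, hwind⟩


/-- All periodic orbits of `f_r : X → X` have the same length and the same winding number. -/
theorem periodic_orbits_same_length_and_winding
    (X : Finset (AddCircle (1:ℝ))) (r : ℝ) (hr0 : 0 < r) (hr1 : r ≤ 1)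
    (f : AddCircle (1:ℝ) → AddCircle (1:ℝ)) (hf : IsCyclicMap X r f)
    (x y : AddCircle (1:ℝ)) (hx : x ∈ X) (hy : y ∈ X)
    (hxper : ∃ i, 1 ≤ i ∧ f^[i] x = x) (hyper : ∃ i, 1 ≤ i ∧ f^[i] y = y) :
    Function.minimalPeriod f x = Function.minimalPeriod f y ∧
      winding f x (Function.minimalPeriod f x) = winding f y (Function.minimalPeriod f y) := by
  classical
  obtain ⟨ix, hix1, hixe⟩ := hxper
  obtain ⟨iy, hiy1, hiye⟩ := hyper
  set P : Finset (AddCircle (1:ℝ)) :=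
    ((Finset.range ix).image (fun t => f^[t] x)) ∪
      ((Finset.range iy).image (fun t => f^[t] y)) with hP
  have hxP : x ∈ P := by
    rw [hP]
    apply Finset.mem_union_left
    exact Finset.mem_image.mpr ⟨0, Finset.mem_range.mpr (by omega), rfl⟩
  have hyP : y ∈ P := by
    rw [hP]
    apply Finset.mem_union_right
    exact Finset.mem_image.mpr ⟨0, Finset.mem_range.mpr (by omega), rfl⟩
  have hPX : ∀ q ∈ P, q ∈ X := by
    intro q hq
    rw [hP, Finset.mem_union] at hq
    rcases hq with hq | hq
    · obtain ⟨t, -, rfl⟩ := Finset.mem_image.mp hq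
      exact iter_mem hf hx t
    · obtain ⟨t, -, rfl⟩ := Finset.mem_image.mp hq
      exact iter_mem hf hy t
  have horb : ∀ (w : AddCircle (1:ℝ)) (i : ℕ), 1 ≤ i → f^[i] w = w →
      ∀ t, t < i → f (f^[t] w) ∈ (Finset.range i).image (fun t => f^[t] w) := by
    intro w i hi1 hie t hti
    have hit : f (f^[t] w) = f^[t+1] w := (Function.iterate_succ_apply' f t w).symm
    rw [hit]
    rcases Nat.lt_or_ge (t+1) i with h | h
    · exact Finset.mem_image.mpr ⟨t+1, Finset.mem_range.mpr h, rfl⟩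
    · have : t + 1 = i := by omega
      rw [this, hie]
      exact Finset.mem_image.mpr ⟨0, Finset.mem_range.mpr (by omega), rfl⟩
  have hPf : ∀ q ∈ P, f q ∈ P := by
    intro q hq
    rw [hP, Finset.mem_union] at hq
    rcases hq with hq | hq
    · obtain ⟨t, ht, rfl⟩ := Finset.mem_image.mp hq
      rw [hP]
      exact Finset.mem_union_left _ (horb x ix hix1 hixe t (Finset.mem_range.mp ht))
    · obtain ⟨t, ht, rfl⟩ := Finset.mem_image.mp hq
      rw [hP]
      exact Finset.mem_union_right _ (horb y iy hiy1 hiye t (Finset.mem_range.mp ht))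
  have hPper : ∀ q ∈ P, ∃ m, 1 ≤ m ∧ f^[m] q = q := by
    have key : ∀ (w : AddCircle (1:ℝ)) (i : ℕ), 1 ≤ i → f^[i] w = w →
        ∀ t, f^[i] (f^[t] w) = f^[t] w := by
      intro w i hi1 hie t
      rw [← Function.iterate_add_apply, Nat.add_comm, Function.iterate_add_apply, hie]
    intro q hq
    rw [hP, Finset.mem_union] at hq
    rcases hq with hq | hq
    · obtain ⟨t, -, rfl⟩ := Finset.mem_image.mp hq
      exact ⟨ix, hix1, key x ix hix1 hixe t⟩
    · obtain ⟨t, -, rfl⟩ := Finset.mem_image.mp hq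
      exact ⟨iy, hiy1, key y iy hiy1 hiye t⟩
  have hxpp : x ∈ Function.periodicPts f := ⟨ix, by omega, hixe⟩
  have hypp : y ∈ Function.periodicPts f := ⟨iy, by omega, hiye⟩
  by_cases hfix : ∃ z ∈ P, f z = z
  · obtain ⟨z, hzP, hfz⟩ := hfix
    have hfx : f x = x := fixed_propagates hf (hPX z hzP) hfz hx ⟨ix, hix1, hixe⟩
    have hfy : f y = y := fixed_propagates hf (hPX z hzP) hfz hy ⟨iy, hiy1, hiye⟩
    have hmx : Function.minimalPeriod f x = 1 :=
      Function.minimalPeriod_eq_one_iff_isFixedPt.mpr hfx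
    have hmy : Function.minimalPeriod f y = 1 :=
      Function.minimalPeriod_eq_one_iff_isFixedPt.mpr hfy
    refine ⟨by rw [hmx, hmy], ?_⟩
    rw [hmx, hmy]
    show (∑ i ∈ Finset.range 1, cdist (f^[i] x) (f^[i+1] x))
      = ∑ i ∈ Finset.range 1, cdist (f^[i] y) (f^[i+1] y)
    simp only [Finset.sum_range_one, Function.iterate_zero_apply, zero_add,
      Function.iterate_one, hfx, hfy, cdist_self]
  · push_neg at hfix
    obtain ⟨n, kk, p, hPsurj, hperiodic, hwind⟩ :=
      main_rotation hf P hPX hPf hPper hfix hxP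
    obtain ⟨jx, hjx, hjxe⟩ := hPsurj x hxP
    obtain ⟨jy, hjy, hjye⟩ := hPsurj y hyP
    have hmx0 : 0 < Function.minimalPeriod f x :=
      Function.minimalPeriod_pos_of_mem_periodicPts hxpp
    have hmy0 : 0 < Function.minimalPeriod f y :=
      Function.minimalPeriod_pos_of_mem_periodicPts hypp
    have hmxper : f^[Function.minimalPeriod f x] x = x :=
      Function.iterate_minimalPeriod
    have hmyper : f^[Function.minimalPeriod f y] y = y :=
      Function.iterate_minimalPeriod
    have hdx : n ∣ Function.minimalPeriod f x * kk := by
      apply (hperiodic jx (Function.minimalPeriod f x)).mp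
      rw [hjxe]
      exact hmxper
    have hdy : n ∣ Function.minimalPeriod f y * kk := by
      apply (hperiodic jy (Function.minimalPeriod f y)).mp
      rw [hjye]
      exact hmyper
    have hyx : f^[Function.minimalPeriod f x] y = y := by
      rw [← hjye]
      exact (hperiodic jy _).mpr hdx
    have hxy : f^[Function.minimalPeriod f y] x = x := by
      rw [← hjxe]
      exact (hperiodic jx _).mpr hdy
    have h1 : Function.minimalPeriod f y ≤ Function.minimalPeriod f x :=
      Function.IsPeriodicPt.minimalPeriod_le hmx0 hyx
    have h2 : Function.minimalPeriod f x ≤ Function.minimalPeriod f y :=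
      Function.IsPeriodicPt.minimalPeriod_le hmy0 hxy
    have heq : Function.minimalPeriod f x = Function.minimalPeriod f y :=
      le_antisymm h2 h1
    refine ⟨heq, ?_⟩
    rw [← heq]
    have wx := hwind jx (Function.minimalPeriod f x) hdx
    have wy := hwind jy (Function.minimalPeriod f x) hdx
    rw [hjxe] at wx
    rw [hjye] at wy
    rw [wx, wy]
end
end

section
/- Let X be a finite subset of S^1, 0 < r ≤ 1, and suppose all periodic orbits of f_r : X → X have winding number w and length ℓ. Then for every x ∈ X, the limit lim_{n→∞} (1/n) Σ_{i=0}^{n-1} d⃗(f_r^i(x), f_r^{i+1}(x)) exists and equals w/ℓ. In particular w/ℓ < r. -/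
open Filter

noncomputable section

/-- If all periodic orbits of `f_r : X → X` have winding number `w` and length `ℓ`, then for
every `x ∈ X` the average clockwise displacement converges to `w/ℓ`; in particular `w/ℓ < r`. -/
theorem winding_fraction_limit
    (X : Finset (AddCircle (1:ℝ))) (hX : X.Nonempty)
    (r : ℝ) (hr0 : 0 < r) (hr1 : r ≤ 1)
    (f : AddCircle (1:ℝ) → AddCircle (1:ℝ)) (hf : IsCyclicMap X r f)
    (w ℓ : ℕ) (hℓ : 1 ≤ ℓ)
    (hper : ∀ x ∈ X, (∃ i, 1 ≤ i ∧ f^[i] x = x) →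
      Function.minimalPeriod f x = ℓ ∧ winding f x ℓ = w) :
    (∀ x ∈ X,
      Tendsto (fun n : ℕ =>
          (1 / (n : ℝ)) * ∑ i ∈ Finset.range n, cdist (f^[i] x) (f^[i+1] x))
        atTop (nhds ((w : ℝ) / ℓ))) ∧
    (w : ℝ) / ℓ < r := by
  classical
  have hcd0 : ∀ a b : AddCircle (1:ℝ), 0 ≤ cdist a b := fun a b =>
    ((AddCircle.equivIco 1 0) (b - a)).2.1
  have hcd1 : ∀ a b : AddCircle (1:ℝ), cdist a b < 1 := by
    intro a b
    have h := ((AddCircle.equivIco 1 0) (b - a)).2.2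
    simp at h
    exact h
  have horb : ∀ x ∈ X, ∀ i, f^[i] x ∈ X := by
    intro x hx i
    induction i with
    | zero => simpa
    | succ n ih => rw [Function.iterate_succ_apply']; exact (hf _ ih).1
  have key : ∀ x ∈ X, ∃ m, f^[ℓ] (f^[m] x) = f^[m] x ∧ winding f (f^[m] x) ℓ = w := by
    intro x hx
    obtain ⟨a, b, hab, he⟩ := Finite.exists_ne_map_eq_of_infinite
      (fun n : ℕ => (⟨f^[n] x, horb x hx n⟩ : X))
    wlog hlt : a < b generalizing a b
    · exact this b a hab.symm he.symm ((Ne.lt_or_gt hab).resolve_left hlt)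
    have heq : f^[a] x = f^[b] x := congrArg Subtype.val he
    have hp : f^[b - a] (f^[a] x) = f^[a] x := by
      rw [← Function.iterate_add_apply, Nat.sub_add_cancel hlt.le, ← heq]
    have hmin := hper (f^[a] x) (horb x hx a) ⟨b - a, by omega, hp⟩
    have h2 : f^[Function.minimalPeriod f (f^[a] x)] (f^[a] x) = f^[a] x :=
      Function.iterate_minimalPeriod
    rw [hmin.1] at h2
    exact ⟨a, h2, hmin.2⟩
  have hℓpos : 0 < ℓ := by omega
  have hℓR : (0:ℝ) < ℓ := by exact_mod_cast hℓpos
  -- w/ℓ < r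
  obtain ⟨x0, hx0⟩ := hX
  obtain ⟨m0, hy0, hw0⟩ := key x0 hx0
  have hy0X : f^[m0] x0 ∈ X := horb x0 hx0 m0
  have hwlt : (w:ℝ) < ℓ * r := by
    have hlt : winding f (f^[m0] x0) ℓ < ∑ _i ∈ Finset.range ℓ, r := by
      apply Finset.sum_lt_sum_of_nonempty (Finset.nonempty_range_iff.2 (by omega))
      intro i _
      have hi : f^[i] (f^[m0] x0) ∈ X := horb _ hy0X i
      have h := (hf _ hi).2.1
      rwa [Function.iterate_succ_apply']
    rw [hw0] at hlt
    simpa [Finset.sum_const, Finset.card_range, nsmul_eq_mul] using hlt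
  have hq : (w:ℝ)/ℓ < r := by
    rw [div_lt_iff₀ hℓR, mul_comm]
    exact hwlt
  refine ⟨?_, hq⟩
  intro x hx
  obtain ⟨m, hyper, hwind⟩ := key x hx
  set y := f^[m] x with hydef
  set q : ℝ := (w:ℝ)/ℓ with hqdef
  set a : ℕ → ℝ := fun i => cdist (f^[i] x) (f^[i+1] x) with hadef
  set S : ℕ → ℝ := fun n => ∑ i ∈ Finset.range n, a i with hSdef
  have hqℓ : q * ℓ = w := div_mul_cancel₀ _ (ne_of_gt hℓR)
  have hq0 : 0 ≤ q := by positivity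
  have hq1 : q ≤ 1 := le_of_lt (lt_of_lt_of_le hq hr1)
  have ha0 : ∀ i, 0 ≤ a i := fun i => hcd0 _ _
  have ha1 : ∀ i, a i ≤ 1 := fun i => (hcd1 _ _).le
  have hchunk : ∀ p s : ℕ, ∑ i ∈ Finset.range s, a (p + i) ≤ s := by
    intro p s
    calc ∑ i ∈ Finset.range s, a (p+i) ≤ ∑ _i ∈ Finset.range s, (1:ℝ) :=
          Finset.sum_le_sum (fun i _ => ha1 _)
      _ = s := by simp
  have hchunk0 : ∀ p s : ℕ, 0 ≤ ∑ i ∈ Finset.range s, a (p + i) :=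
    fun p s => Finset.sum_nonneg (fun i _ => ha0 _)
  have hym : ∀ k, f^[m + k * ℓ] x = y := by
    intro k
    induction k with
    | zero => simp [hydef]
    | succ k ih =>
      have h : m + (k+1) * ℓ = ℓ + (m + k*ℓ) := by ring
      rw [h, Function.iterate_add_apply, ih]
      exact hyper
  have hshift : ∀ k i, a ((m + k*ℓ) + i) = cdist (f^[i] y) (f^[i+1] y) := by
    intro k i
    have h1 : f^[(m + k*ℓ) + i] x = f^[i] y := by
      have h : (m + k*ℓ) + i = i + (m + k*ℓ) := by ring
      rw [h, Function.iterate_add_apply, hym]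
    have h2 : f^[(m + k*ℓ) + i + 1] x = f^[i+1] y := by
      have h : (m + k*ℓ) + i + 1 = (i+1) + (m + k*ℓ) := by ring
      rw [h, Function.iterate_add_apply, hym]
    simp only [hadef, h1, h2]
  have hSA : ∀ k : ℕ, S (m + k*ℓ) = S m + k * w := by
    intro k
    induction k with
    | zero => simp
    | succ k ih =>
      have hn : m + (k+1)*ℓ = (m + k*ℓ) + ℓ := by ring
      have hsum : S ((m + k*ℓ) + ℓ)
          = S (m + k*ℓ) + ∑ i ∈ Finset.range ℓ, a ((m + k*ℓ) + i) := by
        simp [hSdef, Finset.sum_range_add]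
      have hper' : ∑ i ∈ Finset.range ℓ, a ((m + k*ℓ) + i) = winding f y ℓ :=
        Finset.sum_congr rfl (fun i _ => hshift k i)
      rw [hn, hsum, ih, hper', hwind]
      push_cast
      ring
  have hbound : ∀ n : ℕ, m ≤ n → |S n - q * n| ≤ (m + ℓ : ℝ) := by
    intro n hn
    set k := (n - m) / ℓ with hkdef
    set s := (n - m) % ℓ with hsdef
    have hks : n = (m + k * ℓ) + s := by
      have h := Nat.div_add_mod (n - m) ℓ
      have h2 : k * ℓ + s = n - m := by rw [mul_comm]; exact h
      omega
    have hs : s < ℓ := Nat.mod_lt _ hℓpos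
    have hSn : S n = S (m + k*ℓ) + ∑ i ∈ Finset.range s, a ((m + k*ℓ) + i) := by
      rw [hks]; simp [hSdef, Finset.sum_range_add]
    set R := ∑ i ∈ Finset.range s, a ((m + k*ℓ) + i) with hRdef
    have hR0 : 0 ≤ R := hchunk0 _ _
    have hRs : R ≤ s := hchunk _ _
    have hSm0 : 0 ≤ S m := Finset.sum_nonneg (fun i _ => ha0 _)
    have hSmm : S m ≤ m := by
      calc S m ≤ ∑ _i ∈ Finset.range m, (1:ℝ) := Finset.sum_le_sum (fun i _ => ha1 _)
        _ = m := by simp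
    have hcast : (n:ℝ) = m + k*ℓ + s := by exact_mod_cast congrArg (Nat.cast : ℕ → ℝ) hks
    have hsl : (s:ℝ) ≤ ℓ := by exact_mod_cast hs.le
    have hs0 : (0:ℝ) ≤ s := Nat.cast_nonneg s
    have hqms : q * ((m:ℝ) + s) ≤ (m:ℝ) + s :=
      mul_le_of_le_one_left (by positivity) hq1
    have hqms0 : (0:ℝ) ≤ q * ((m:ℝ) + s) := by positivity
    have hkw : q * ((k:ℝ) * ℓ) = (k:ℝ) * w := by
      calc q * ((k:ℝ) * ℓ) = (q * ℓ) * k := by ring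
        _ = (k:ℝ) * w := by rw [hqℓ]; ring
    have hqexp : q * ((m:ℝ) + k*ℓ + s) = q*m + k*w + q*s := by
      linear_combination hkw
    have hsplit : q*(m:ℝ) + q*(s:ℝ) = q*((m:ℝ) + s) := by ring
    rw [hSn, hSA k, hcast, hqexp, abs_le]
    constructor <;> linarith [hqms, hqms0, hsplit, hR0, hRs, hSm0, hSmm, hsl, hs0]
  have htend : Tendsto (fun n : ℕ => (1/(n:ℝ)) * S n - q) atTop (nhds 0) := by
    have hbnd : ∀ᶠ n : ℕ in atTop, ‖(1/(n:ℝ)) * S n - q‖ ≤ ((m:ℝ) + ℓ) / n := by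
      refine eventually_atTop.2 ⟨max m 1, fun n hn => ?_⟩
      have hm : m ≤ n := le_trans (le_max_left _ _) hn
      have hn1 : 1 ≤ n := le_trans (le_max_right _ _) hn
      have hnR : (0:ℝ) < n := by exact_mod_cast hn1
      have heq : (1/(n:ℝ)) * S n - q = (S n - q * n) / n := by
        field_simp
      rw [heq, Real.norm_eq_abs, abs_div, abs_of_pos hnR]
      gcongr
      exact hbound n hm
    exact squeeze_zero_norm' hbnd (tendsto_const_div_atTop_nhds_zero_nat _)
  have := htend.add_const q
  simpa using this
end
end

section
/- For integers k > m ≥ 1, the iterated integral ∫_{0 ≤ t_1 ≤ t_2 ≤ ⋯ ≤ t_k} e^{−t_m − t_k} dt_1 ⋯ dt_k equals 1/2^m. -/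
open MeasureTheory Finset

section aux

/-- The lower-triangular matrix of all ones (partial-sum matrix). -/
noncomputable def csA (k : ℕ) : Matrix (Fin k) (Fin k) ℝ :=
  Matrix.of fun i j => if j ≤ i then (1 : ℝ) else 0

lemma csA_det (k : ℕ) : (csA k).det = 1 := by
  rw [Matrix.det_of_lowerTriangular]
  · simp [csA]
  · intro i j h
    have hij : i < j := h
    simp only [csA, Matrix.of_apply]
    rw [if_neg (not_le.mpr hij)]

lemma csT_apply {k : ℕ} (s : Fin k → ℝ) (j : Fin k) :
    Matrix.toLin' (csA k) s j = ∑ i ∈ univ.filter (· ≤ j), s i := by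
  simp [Matrix.toLin'_apply, Matrix.mulVec, dotProduct, csA, sum_filter, ite_mul]

lemma cs_mem_iff {k : ℕ} (hk0 : 0 < k) (s : Fin k → ℝ) :
    (0 ≤ Matrix.toLin' (csA k) s ⟨0, hk0⟩ ∧ Monotone (Matrix.toLin' (csA k) s)) ↔
      ∀ i, 0 ≤ s i := by
  constructor
  · rintro ⟨h0, hmono⟩ i
    rcases Nat.eq_zero_or_pos i.val with hi | hi
    · have hieq : i = ⟨0, hk0⟩ := Fin.ext hi
      have hval : Matrix.toLin' (csA k) s ⟨0, hk0⟩ = s ⟨0, hk0⟩ := by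
        rw [csT_apply]
        rw [show univ.filter (· ≤ (⟨0, hk0⟩ : Fin k)) = {(⟨0, hk0⟩ : Fin k)} by
          ext x; simp [Fin.le_def, Fin.ext_iff]]
        simp
      rw [hieq]
      rw [hval] at h0
      exact h0
    · set a : Fin k := ⟨i.val - 1, by omega⟩ with ha
      have hab : univ.filter (· ≤ i) = insert i (univ.filter (· ≤ a)) := by
        ext x
        simp only [mem_filter, mem_univ, true_and, mem_insert, Fin.le_def, Fin.ext_iff, ha]
        omega
      have hnotmem : i ∉ univ.filter (· ≤ a) := by
        simp only [mem_filter, mem_univ, true_and, Fin.le_def, ha]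
        omega
      have hsum : Matrix.toLin' (csA k) s i = s i + Matrix.toLin' (csA k) s a := by
        rw [csT_apply, csT_apply, hab, sum_insert hnotmem]
      have hle : a ≤ i := by
        simp only [Fin.le_def, ha]; omega
      have := hmono hle
      linarith
  · intro hs
    constructor
    · rw [csT_apply]
      exact Finset.sum_nonneg fun i _ => hs i
    · intro a b hab
      rw [csT_apply, csT_apply]
      apply Finset.sum_le_sum_of_subset_of_nonneg
      · intro x hx
        simp only [mem_filter, mem_univ, true_and] at hx ⊢
        exact le_trans hx hab
      · intro i _ _
        exact hs i

lemma integral_exp_neg_two_mul_Ici : ∫ x in Set.Ici (0:ℝ), Real.exp (-(2 * x)) = 1/2 := by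
  rw [MeasureTheory.integral_Ici_eq_integral_Ioi]
  have h := integral_comp_mul_left_Ioi (fun x : ℝ => Real.exp (-x)) 0 (by norm_num : (0:ℝ) < 2)
  simp only [mul_zero, integral_exp_neg_Ioi_zero, smul_eq_mul, mul_one] at h
  rw [h]
  norm_num

lemma integral_exp_neg_one_mul_Ici : ∫ x in Set.Ici (0:ℝ), Real.exp (-(1 * x)) = 1 := by
  simp only [one_mul]
  rw [MeasureTheory.integral_Ici_eq_integral_Ioi]
  exact integral_exp_neg_Ioi_zero

lemma card_filter_lt {k m : ℕ} (hmk : m ≤ k) :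
    (univ.filter (fun i : Fin k => (i : ℕ) < m)).card = m := by
  have : univ.filter (fun i : Fin k => (i : ℕ) < m)
      = (Finset.range m).attachFin (fun a ha => lt_of_lt_of_le (Finset.mem_range.mp ha) hmk) := by
    ext i
    simp [Finset.mem_attachFin, Finset.mem_range]
  rw [this, Finset.card_attachFin, Finset.card_range]

end aux

/-- For integers `k > m ≥ 1`, the iterated integral
`∫_{0 ≤ t₁ ≤ ⋯ ≤ t_k} e^{−t_m − t_k} dt₁ ⋯ dt_k = 1/2^m`. -/
theorem ordered_simplex_exponential_integral (k m : ℕ) (hm : 1 ≤ m) (hk : m < k) :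
    ∫ t in {t : Fin k → ℝ | 0 ≤ t ⟨0, by omega⟩ ∧ Monotone t},
        Real.exp (-(t ⟨m - 1, by omega⟩) - t ⟨k - 1, by omega⟩)
      ∂(volume : Measure (Fin k → ℝ)) = 1 / 2 ^ m := by
  have hk0 : 0 < k := by omega
  set T : (Fin k → ℝ) → (Fin k → ℝ) := ⇑(Matrix.toLin' (csA k)) with hT
  have hdet : (csA k).det = 1 := csA_det k
  -- T is measure preserving
  have hMP : MeasurePreserving T volume volume := by
    refine ⟨(Matrix.toLin' (csA k)).continuous_of_finiteDimensional.measurable, ?_⟩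
    rw [hT, Real.map_matrix_volume_pi_eq_smul_volume_pi (by rw [hdet]; norm_num), hdet]
    simp
  -- T is a measurable embedding
  have hinv : Invertible (csA k) := (csA k).invertibleOfIsUnitDet (by rw [hdet]; exact isUnit_one)
  have hemb : MeasurableEmbedding T := by
    let eL : (Fin k → ℝ) ≃ₗ[ℝ] (Fin k → ℝ) := (csA k).toLinearEquiv' hinv
    let eM : (Fin k → ℝ) ≃ᵐ (Fin k → ℝ) :=
      { toEquiv := eL.toEquiv
        measurable_toFun := eL.toLinearMap.continuous_of_finiteDimensional.measurable
        measurable_invFun := eL.symm.toLinearMap.continuous_of_finiteDimensional.measurable }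
    have hcoe : ⇑eM = T := rfl
    have := eM.measurableEmbedding
    rwa [hcoe] at this
  -- rewrite the set integral via T
  rw [← hMP.setIntegral_preimage_emb hemb]
  -- the preimage is the positive orthant
  have hpre : T ⁻¹' {t : Fin k → ℝ | 0 ≤ t ⟨0, by omega⟩ ∧ Monotone t}
      = Set.univ.pi fun _ : Fin k => Set.Ici (0:ℝ) := by
    ext s
    simp only [Set.mem_preimage, Set.mem_setOf_eq, Set.mem_pi, Set.mem_univ, true_implies,
      Set.mem_Ici]
    exact cs_mem_iff hk0 s
  rw [hpre]
  -- rewrite the integrand as a product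
  have hint : ∀ s : Fin k → ℝ,
      Real.exp (-(T s ⟨m - 1, by omega⟩) - T s ⟨k - 1, by omega⟩)
        = ∏ i : Fin k, Real.exp (-((if (i : ℕ) < m then (2:ℝ) else 1) * s i)) := by
    intro s
    rw [← Real.exp_sum]
    congr 1
    have hm' : T s ⟨m - 1, by omega⟩ = ∑ i ∈ univ.filter (fun i : Fin k => (i : ℕ) < m), s i := by
      rw [hT, csT_apply]
      congr 1
      ext x
      simp only [mem_filter, mem_univ, true_and, Fin.le_def]
      omega
    have hk' : T s ⟨k - 1, by omega⟩ = ∑ i, s i := by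
      rw [hT, csT_apply]
      congr 1
      ext x
      simp only [mem_filter, mem_univ, true_and, iff_true, Fin.le_def]
      omega
    rw [hm', hk']
    have hc : ∀ i : Fin k, -((if (i : ℕ) < m then (2:ℝ) else 1) * s i)
        = -(s i) - (if (i : ℕ) < m then s i else 0) := by
      intro i
      by_cases h : (i : ℕ) < m <;> simp [h] <;> ring
    rw [Finset.sum_congr rfl fun i _ => hc i, Finset.sum_sub_distrib, ← Finset.sum_filter,
      Finset.sum_neg_distrib]
    ring
  simp only [hint]
  -- turn the set integral into a product of 1D integrals
  rw [← integral_indicator (MeasurableSet.univ_pi fun _ => measurableSet_Ici)]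
  have hind : (Set.indicator (Set.univ.pi fun _ : Fin k => Set.Ici (0:ℝ))
        fun s => ∏ i : Fin k, Real.exp (-((if (i : ℕ) < m then (2:ℝ) else 1) * s i)))
      = fun s => ∏ i : Fin k,
          Set.indicator (Set.Ici (0:ℝ))
            (fun x => Real.exp (-((if (i : ℕ) < m then (2:ℝ) else 1) * x))) (s i) := by
    funext x
    by_cases hx : x ∈ Set.univ.pi fun _ : Fin k => Set.Ici (0:ℝ)
    · rw [Set.indicator_of_mem hx]
      refine Finset.prod_congr rfl fun i _ => ?_
      rw [Set.indicator_of_mem (show x i ∈ Set.Ici (0:ℝ) from hx i (Set.mem_univ i))]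
    · rw [Set.indicator_of_notMem hx]
      simp only [Set.mem_pi, Set.mem_univ, true_implies, not_forall] at hx
      obtain ⟨i, hi⟩ := hx
      exact (Finset.prod_eq_zero (Finset.mem_univ i)
        (Set.indicator_of_notMem (show x i ∉ Set.Ici (0:ℝ) from hi) _)).symm
  rw [hind]
  rw [MeasureTheory.integral_fintype_prod_volume_eq_prod (ι := Fin k)
    (fun i x => Set.indicator (Set.Ici (0:ℝ))
      (fun y => Real.exp (-((if (i : ℕ) < m then (2:ℝ) else 1) * y))) x)]
  have hfac : ∀ i : Fin k,
      (∫ x : ℝ, Set.indicator (Set.Ici (0:ℝ))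
          (fun y => Real.exp (-((if (i : ℕ) < m then (2:ℝ) else 1) * y))) x)
        = if (i : ℕ) < m then (1/2 : ℝ) else 1 := by
    intro i
    rw [integral_indicator measurableSet_Ici]
    by_cases h : (i : ℕ) < m
    · simp only [h, if_true]
      exact integral_exp_neg_two_mul_Ici
    · simp only [h, if_false]
      exact integral_exp_neg_one_mul_Ici
  rw [Finset.prod_congr rfl fun i _ => hfac i, Finset.prod_ite, Finset.prod_const,
    Finset.prod_const, card_filter_lt hk.le, one_pow, mul_one, one_div, inv_pow, one_div]
end

section
/- Fix q ≥ 2 and i ≥ 0. Let K_i(q) ⊆ ℝ_+^{2i+2} be the cone of u = (z_1, …, z_{i+1}, w_1, …, w_{i+1}) with nonnegative coordinates satisfying: z_1+⋯+z_j ≥ w_1+⋯+w_j for 1 ≤ j ≤ i; z_1+⋯+z_{i+1} < w_1+⋯+w_{i+1}; and z_1+⋯+z_j < w_1+⋯+w_{j+q−2} for 1 ≤ j ≤ i−q+2. Then ∫_{K_i(q)} e^{−‖u‖_1} du = C_{i,q−2} / 2^{2i+1}, where C_{i,h} is the number of Dyck paths of order i with all heights at most h. -/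
open MeasureTheory

/-- Partial sum of the first `j` coordinates of a vector. -/
def psum {n : ℕ} (v : Fin n → ℝ) (j : ℕ) : ℝ :=
  ∑ t ∈ Finset.range j, if h : t < n then v ⟨t, h⟩ else 0

/-- The height of the lattice path encoded by `s` (true = up-step `(1,1)`,
false = down-step `(1,−1)`) after `j` steps. -/
def pathHeight {n : ℕ} (s : Fin n → Bool) (j : ℕ) : ℤ :=
  ∑ t ∈ Finset.range j, if h : t < n then (if s ⟨t, h⟩ then 1 else -1) else 0

/-- The cone `K_i(q)` defined by `H(1,1), …, H(i,i)`, `¬H(i+1,i+1)`, and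
`¬H(1,q−1), …, ¬H(i−q+2,i)`. -/
def KconeQ (i q : ℕ) : Set ((Fin (i+1) → ℝ) × (Fin (i+1) → ℝ)) :=
  {u | (∀ j, 0 ≤ u.1 j) ∧ (∀ j, 0 ≤ u.2 j) ∧
    (∀ j, 1 ≤ j → j ≤ i → psum u.2 j ≤ psum u.1 j) ∧
    psum u.1 (i+1) < psum u.2 (i+1) ∧
    (∀ j, 1 ≤ j → j + q ≤ i + 2 → psum u.1 j < psum u.2 (j + q - 2))}

namespace KQ

variable {n : ℕ}

/-- number of positions `t < k` with letter `b`. -/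
def cnt (s : Fin n → Bool) (b : Bool) (k : ℕ) : ℕ :=
  (Finset.univ.filter fun t : Fin n => t.val < k ∧ s t = b).card

lemma cnt_mono (s : Fin n → Bool) (b : Bool) {k k' : ℕ} (h : k ≤ k') :
    cnt s b k ≤ cnt s b k' := by
  apply Finset.card_le_card
  intro t ht
  simp only [Finset.mem_filter] at *
  exact ⟨ht.1, ht.2.1.trans_le h, ht.2.2⟩

lemma cnt_stab (s : Fin n → Bool) (b : Bool) {k : ℕ} (h : n ≤ k) :
    cnt s b k = cnt s b n := by
  unfold cnt
  congr 1
  apply Finset.filter_congr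
  intro t _
  have := t.isLt
  constructor
  · rintro ⟨_, h2⟩; exact ⟨this, h2⟩
  · rintro ⟨_, h2⟩; exact ⟨lt_of_lt_of_le this h, h2⟩

lemma card_filter_val_lt (k : ℕ) :
    (Finset.univ.filter fun t : Fin n => t.val < k).card = min k n := by
  rw [Finset.card_filter]
  rw [Fin.sum_univ_eq_sum_range (fun t => if t < k then 1 else 0) n]
  rw [← Finset.card_filter]
  have : (Finset.range n).filter (fun t => t < k) = Finset.range (min k n) := by
    ext t; simp; omega
  rw [this, Finset.card_range]

lemma cnt_le (s : Fin n → Bool) (b : Bool) (k : ℕ) : cnt s b k ≤ min k n := by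
  rw [← card_filter_val_lt]
  apply Finset.card_le_card
  intro t ht
  simp only [Finset.mem_filter] at *
  exact ⟨ht.1, ht.2.1⟩

lemma cnt_succ (s : Fin n → Bool) (b : Bool) {k : ℕ} (hk : k < n) :
    cnt s b (k+1) = cnt s b k + (if s ⟨k, hk⟩ = b then 1 else 0) := by
  unfold cnt
  have hsplit : (Finset.univ.filter fun t : Fin n => t.val < k+1 ∧ s t = b)
      = (Finset.univ.filter fun t : Fin n => t.val < k ∧ s t = b)
        ∪ (Finset.univ.filter fun t : Fin n => t = ⟨k, hk⟩ ∧ s t = b) := by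
    ext t
    simp only [Finset.mem_filter, Finset.mem_union, Finset.mem_univ, true_and, Fin.ext_iff]
    constructor
    · rintro ⟨h1, h2⟩
      rcases Nat.lt_succ_iff_lt_or_eq.1 h1 with h | h
      · exact Or.inl ⟨h, h2⟩
      · exact Or.inr ⟨h, h2⟩
    · rintro (⟨h1, h2⟩ | ⟨h1, h2⟩)
      · exact ⟨Nat.lt_succ_of_lt h1, h2⟩
      · exact ⟨by omega, h2⟩
  rw [hsplit, Finset.card_union_of_disjoint]
  · congr 1
    split_ifs with h
    · rw [show (Finset.univ.filter fun t : Fin n => t = ⟨k, hk⟩ ∧ s t = b) = {⟨k, hk⟩} by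
        ext t; simp only [Finset.mem_filter, Finset.mem_univ, true_and, Finset.mem_singleton]
        constructor
        · rintro ⟨h1, _⟩; exact h1
        · rintro rfl; exact ⟨rfl, h⟩]
      simp
    · rw [show (Finset.univ.filter fun t : Fin n => t = ⟨k, hk⟩ ∧ s t = b) = ∅ by
        ext t; simp only [Finset.mem_filter, Finset.mem_univ, true_and, Finset.notMem_empty,
          iff_false, not_and]
        rintro rfl; exact h]
      simp
  · rw [Finset.disjoint_left]
    intro t ht ht'
    simp only [Finset.mem_filter] at *
    have := ht'.2.1
    subst this
    exact absurd ht.2.1 (by simp)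

lemma cnt_add (s : Fin n → Bool) {k : ℕ} (hk : k ≤ n) :
    cnt s true k + cnt s false k = k := by
  unfold cnt
  have h := Finset.card_filter_add_card_filter_not
    (s := Finset.univ.filter fun t : Fin n => t.val < k) (fun t : Fin n => s t = true)
  rw [Finset.filter_filter, Finset.filter_filter] at h
  rw [card_filter_val_lt, min_eq_left hk] at h
  have e2 : (Finset.univ.filter fun t : Fin n => t.val < k ∧ ¬ s t = true)
      = Finset.univ.filter fun t : Fin n => t.val < k ∧ s t = false := by
    apply Finset.filter_congr; intro t _; simp
  rw [e2] at h
  exact h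

/-- `Lpos s b j` = index one past the position of the `j`-th letter `b`
(length of the prefix on which the count of `b`'s stays `< j`). -/
def Lpos (s : Fin n → Bool) (b : Bool) (j : ℕ) : ℕ :=
  (Finset.univ.filter fun k : Fin n => cnt s b k.val < j).card

lemma Lpos_le (s : Fin n → Bool) (b : Bool) (j : ℕ) : Lpos s b j ≤ n := by
  have := Finset.card_filter_le (Finset.univ : Finset (Fin n))
    (fun k : Fin n => cnt s b k.val < j)
  simpa [Lpos] using this

lemma lt_Lpos_iff (s : Fin n → Bool) (b : Bool) (j : ℕ) (k : Fin n) :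
    k.val < Lpos s b j ↔ cnt s b k.val < j := by
  constructor
  · intro h
    by_contra hc
    push_neg at hc
    have hsub : (Finset.univ.filter fun t : Fin n => cnt s b t.val < j)
        ⊆ Finset.univ.filter fun t : Fin n => t.val < k.val := by
      intro t ht
      simp only [Finset.mem_filter, Finset.mem_univ, true_and] at *
      by_contra hlt
      push_neg at hlt
      have := cnt_mono s b hlt
      omega
    have := Finset.card_le_card hsub
    rw [card_filter_val_lt] at this
    unfold Lpos at h
    omega
  · intro h
    have hsub : (Finset.univ.filter fun t : Fin n => t.val ≤ k.val)
        ⊆ Finset.univ.filter fun t : Fin n => cnt s b t.val < j := by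
      intro t ht
      simp only [Finset.mem_filter, Finset.mem_univ, true_and] at *
      exact lt_of_le_of_lt (cnt_mono s b ht) h
    have hc := Finset.card_le_card hsub
    have : (Finset.univ.filter fun t : Fin n => t.val ≤ k.val).card = k.val + 1 := by
      have : (Finset.univ.filter fun t : Fin n => t.val ≤ k.val)
          = Finset.univ.filter fun t : Fin n => t.val < k.val + 1 := by
        apply Finset.filter_congr; intro t _; simp [Nat.lt_succ_iff]
      rw [this, card_filter_val_lt]
      have := k.isLt; omega
    unfold Lpos
    omega

lemma lt_Lpos_iff' (s : Fin n → Bool) (b : Bool) (j : ℕ) {k : ℕ} (hk : k < n) :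
    k < Lpos s b j ↔ cnt s b k < j :=
  lt_Lpos_iff s b j ⟨k, hk⟩

lemma Lpos_pos (s : Fin n → Bool) (b : Bool) {j : ℕ} (hn : 0 < n) (hj : 1 ≤ j) :
    0 < Lpos s b j := by
  have := (lt_Lpos_iff s b j ⟨0, hn⟩).2 (by simp [cnt]; omega)
  omega

/-- determination : if position `p` carries the `j`-th letter `b` then `Lpos = p+1`. -/
lemma Lpos_eq_of (s : Fin n → Bool) (b : Bool) {j : ℕ} {p : ℕ} (hp : p < n)
    (hl : s ⟨p, hp⟩ = b) (hc : cnt s b (p+1) = j) : Lpos s b j = p + 1 := by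
  have hstep := cnt_succ s b hp
  rw [if_pos hl] at hstep
  have h1 : p < Lpos s b j := by
    have hcp : cnt s b p < j := by omega
    exact (lt_Lpos_iff s b j ⟨p, hp⟩).2 (by simpa using hcp)
  have h2 : Lpos s b j ≤ p + 1 := by
    by_contra hc2
    push_neg at hc2
    have hpn : p + 1 < n := lt_of_lt_of_le hc2 (Lpos_le s b j)
    have h3 : cnt s b (p+1) < j := by
      simpa using (lt_Lpos_iff s b j ⟨p+1, hpn⟩).1 (by simpa using hc2)
    omega
  omega

lemma cnt_Lpos_pred (s : Fin n → Bool) (b : Bool) {j : ℕ} (h0 : 0 < Lpos s b j) :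
    cnt s b (Lpos s b j - 1) < j := by
  have hlt : Lpos s b j - 1 < n := by have := Lpos_le s b j; omega
  have := (lt_Lpos_iff s b j ⟨Lpos s b j - 1, hlt⟩).1 (by simp; omega)
  simpa using this

lemma le_cnt_Lpos (s : Fin n → Bool) (b : Bool) {j : ℕ} (hj : j ≤ cnt s b n) :
    j ≤ cnt s b (Lpos s b j) := by
  rcases Nat.lt_or_ge (Lpos s b j) n with h | h
  · by_contra hc
    push_neg at hc
    have := (lt_Lpos_iff s b j ⟨Lpos s b j, h⟩).2 (by simpa using hc)
    simp at this
  · rw [cnt_stab s b h]; exact hj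

/-- the letter at position `Lpos s b j - 1` is `b`. -/
lemma letter_Lpos (s : Fin n → Bool) (b : Bool) {j : ℕ} (hj1 : 1 ≤ j) (hj : j ≤ cnt s b n) :
    ∃ hp : Lpos s b j - 1 < n, s ⟨Lpos s b j - 1, hp⟩ = b ∧ cnt s b (Lpos s b j) = j := by
  have hn : 0 < n := by
    rcases Nat.eq_zero_or_pos n with h | h
    · subst h; simp [cnt] at hj; omega
    · exact h
  have h0 : 0 < Lpos s b j := Lpos_pos s b hn hj1
  have hp : Lpos s b j - 1 < n := by have := Lpos_le s b j; omega
  refine ⟨hp, ?_⟩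
  have h1 : cnt s b (Lpos s b j - 1) < j := cnt_Lpos_pred s b h0
  have h2 : j ≤ cnt s b (Lpos s b j) := le_cnt_Lpos s b hj
  have hstep := cnt_succ s b hp
  have hrw : Lpos s b j - 1 + 1 = Lpos s b j := by omega
  rw [hrw] at hstep
  by_cases hl : s ⟨Lpos s b j - 1, hp⟩ = b
  · rw [if_pos hl] at hstep; exact ⟨hl, by omega⟩
  · rw [if_neg hl] at hstep; omega

lemma Lpos_ne (s : Fin n → Bool) {b b' : Bool} (hbb : b ≠ b') {j j' : ℕ}
    (hj1 : 1 ≤ j) (hj : j ≤ cnt s b n) (hj1' : 1 ≤ j') (hj' : j' ≤ cnt s b' n) :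
    Lpos s b j ≠ Lpos s b' j' := by
  intro he
  obtain ⟨hp, hl, -⟩ := letter_Lpos s b hj1 hj
  obtain ⟨hp', hl', -⟩ := letter_Lpos s b' hj1' hj'
  have heq : (⟨Lpos s b j - 1, hp⟩ : Fin n) = ⟨Lpos s b' j' - 1, hp'⟩ := by
    simp only [Fin.mk.injEq]; omega
  rw [heq, hl'] at hl
  exact hbb hl.symm

lemma Lpos_le_iff (s : Fin n → Bool) (b b' : Bool) (j j' : ℕ) :
    Lpos s b j ≤ Lpos s b' j' ↔ ∀ k : Fin n, cnt s b k.val < j → cnt s b' k.val < j' := by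
  constructor
  · intro h k hk
    exact (lt_Lpos_iff s b' j' k).1 (lt_of_lt_of_le ((lt_Lpos_iff s b j k).2 hk) h)
  · intro h
    by_contra hc
    push_neg at hc
    have hlt : Lpos s b' j' < n := lt_of_lt_of_le hc (Lpos_le s b j)
    set k : Fin n := ⟨Lpos s b' j', hlt⟩
    have h1 : cnt s b k.val < j := (lt_Lpos_iff s b j k).1 (by simpa [k] using hc)
    have h2 := h k h1
    have := (lt_Lpos_iff s b' j' k).2 h2
    simp [k] at this

/-! ### partial sums -/

lemma psum_succ {m : ℕ} (v : Fin m → ℝ) (j : ℕ) :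
    psum v (j+1) = psum v j + (if h : j < m then v ⟨j, h⟩ else 0) :=
  Finset.sum_range_succ _ _

lemma psum_eq_finsum {m : ℕ} (v : Fin m → ℝ) (j : ℕ) :
    psum v j = ∑ t : Fin m, if t.val < j then v t else 0 := by
  induction j with
  | zero => simp [psum]
  | succ j ih =>
    rw [psum_succ, ih]
    have hpt : ∀ t : Fin m, (if t.val < j+1 then v t else 0)
        = (if t.val < j then v t else 0) + (if t.val = j then v t else 0) := by
      intro t
      rcases lt_trichotomy t.val j with h|h|h
      · rw [if_pos (by omega), if_pos h, if_neg (by omega), add_zero]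
      · rw [if_pos (by omega), if_neg (by omega), if_pos h, zero_add]
      · rw [if_neg (by omega), if_neg (by omega), if_neg (by omega), add_zero]
    rw [Finset.sum_congr rfl (fun t _ => hpt t), Finset.sum_add_distrib]
    congr 1
    by_cases hj : j < m
    · rw [dif_pos hj, Finset.sum_eq_single (⟨j, hj⟩ : Fin m)]
      · simp
      · intro t _ ht
        rw [if_neg]
        intro hv
        exact ht (Fin.ext hv)
      · intro ht; exact absurd (Finset.mem_univ _) ht
    · rw [dif_neg hj]
      symm
      apply Finset.sum_eq_zero
      intro t _
      rw [if_neg]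
      intro hv
      exact hj (hv ▸ t.isLt)

lemma sum_univ_eq_psum {m : ℕ} (v : Fin m → ℝ) : ∑ j : Fin m, v j = psum v m := by
  rw [psum_eq_finsum]
  apply Finset.sum_congr rfl
  intro t _
  rw [if_pos t.isLt]

lemma psum_component {m : ℕ} (v : Fin m → ℝ) (j : Fin m) :
    v j = psum v (j.val+1) - psum v j.val := by
  rw [psum_succ, dif_pos j.isLt]
  simp

lemma psum_lt_psum {m : ℕ} {v : Fin m → ℝ} (hv : ∀ t, 0 < v t) {j j' : ℕ}
    (h : j < j') (h' : j' ≤ m) : psum v j < psum v j' := by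
  induction j' with
  | zero => omega
  | succ j' ih =>
    have hstep : psum v j' < psum v (j'+1) := by
      rw [psum_succ, dif_pos (by omega : j' < m)]
      have := hv ⟨j', by omega⟩
      linarith
    rcases Nat.lt_or_ge j j' with hj | hj
    · exact lt_trans (ih hj (by omega)) hstep
    · have hje : j = j' := by omega
      subst hje
      exact hstep

lemma psum_zero {m : ℕ} (v : Fin m → ℝ) : psum v 0 = 0 := by simp [psum]

lemma psum_pos {m : ℕ} {v : Fin m → ℝ} (hv : ∀ t, 0 < v t) {j : ℕ}
    (hj : 1 ≤ j) (hjm : j ≤ m) : 0 < psum v j := by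
  have := psum_lt_psum hv (show 0 < j by omega) hjm
  rwa [psum_zero] at this

lemma psum_le_psum_iff {m : ℕ} {v : Fin m → ℝ} (hv : ∀ t, 0 < v t) {j j' : ℕ}
    (hj : j ≤ m) (hj' : j' ≤ m) : psum v j ≤ psum v j' ↔ j ≤ j' := by
  constructor
  · intro h
    by_contra hc
    push_neg at hc
    exact absurd h (not_le.2 (psum_lt_psum hv hc hj))
  · intro h
    rcases Nat.lt_or_ge j j' with h1 | h1
    · exact le_of_lt (psum_lt_psum hv h1 hj')
    · have : j = j' := by omega
      subst this; rfl

/-! ### weighted prefix sums -/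

/-- sum of `g` over the positions where fewer than `j` letters `b` have been seen,
i.e. over the prefix of length `Lpos s b j`. -/
def Ssum (s : Fin n → Bool) (b : Bool) (j : ℕ) (g : Fin n → ℝ) : ℝ :=
  ∑ k : Fin n, if cnt s b k.val < j then g k else 0

/-- plain prefix sums -/
def Pref (K : ℕ) (g : Fin n → ℝ) : ℝ :=
  ∑ k : Fin n, if k.val < K then g k else 0

lemma Ssum_eq_Pref (s : Fin n → Bool) (b : Bool) (j : ℕ) (g : Fin n → ℝ) :
    Ssum s b j g = Pref (Lpos s b j) g := by
  apply Finset.sum_congr rfl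
  intro k _
  congr 1
  simp only [eq_iff_iff]
  exact (lt_Lpos_iff s b j k).symm

lemma Pref_mono {K K' : ℕ} (h : K ≤ K') {g : Fin n → ℝ} (hg : ∀ k, 0 ≤ g k) :
    Pref K g ≤ Pref K' g := by
  apply Finset.sum_le_sum
  intro k _
  by_cases hk : k.val < K
  · rw [if_pos hk, if_pos (by omega)]
  · rw [if_neg hk]
    by_cases hk' : k.val < K'
    · rw [if_pos hk']; exact hg k
    · rw [if_neg hk']

lemma Pref_strict {K K' : ℕ} (h : K < K') (hK' : K' ≤ n) {g : Fin n → ℝ}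
    (hg : ∀ k, 0 < g k) : Pref K g < Pref K' g := by
  unfold Pref
  rw [← Finset.sum_filter, ← Finset.sum_filter]
  refine Finset.sum_lt_sum_of_subset ?_ (i := (⟨K, by omega⟩ : Fin n)) ?_ ?_ (hg _) ?_
  · intro t ht
    simp only [Finset.mem_filter, Finset.mem_univ, true_and] at *
    omega
  · simp only [Finset.mem_filter, Finset.mem_univ, true_and]
    exact h
  · simp
  · intro k _ _
    exact le_of_lt (hg k)

lemma Ssum_le_Ssum {s : Fin n → Bool} {b b' : Bool} {j j' : ℕ}
    (h : Lpos s b j ≤ Lpos s b' j') {g : Fin n → ℝ} (hg : ∀ k, 0 ≤ g k) :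
    Ssum s b j g ≤ Ssum s b' j' g := by
  rw [Ssum_eq_Pref, Ssum_eq_Pref]
  exact Pref_mono h hg

lemma Ssum_lt_Ssum {s : Fin n → Bool} {b b' : Bool} {j j' : ℕ}
    (h : Lpos s b j < Lpos s b' j') {g : Fin n → ℝ} (hg : ∀ k, 0 < g k) :
    Ssum s b j g < Ssum s b' j' g := by
  rw [Ssum_eq_Pref, Ssum_eq_Pref]
  exact Pref_strict h (Lpos_le s b' j') hg

/-! ### the cumulative-sum equivalence -/

lemma psum_add {m : ℕ} (a b : Fin m → ℝ) (j : ℕ) :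
    psum (a + b) j = psum a j + psum b j := by
  unfold psum
  rw [← Finset.sum_add_distrib]
  apply Finset.sum_congr rfl
  intro t _
  by_cases h : t < m
  · simp [h]
  · simp [h]

lemma psum_smul {m : ℕ} (c : ℝ) (a : Fin m → ℝ) (j : ℕ) :
    psum (c • a) j = c * psum a j := by
  unfold psum
  rw [Finset.mul_sum]
  apply Finset.sum_congr rfl
  intro t _
  by_cases h : t < m
  · simp [h]
  · simp [h]

lemma ds_psum {m : ℕ} (u : Fin m → ℝ) :
    ∀ j (hj : j < m),
      psum (fun k : Fin m => u k - (if h : 0 < k.val then u ⟨k.val - 1, by omega⟩ else 0)) (j+1)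
        = u ⟨j, hj⟩ := by
  intro j
  induction j with
  | zero =>
    intro hj
    rw [psum_succ, psum_zero, dif_pos hj]
    simp
  | succ j ih =>
    intro hj
    rw [psum_succ, dif_pos hj, ih (by omega)]
    have h1 : 0 < ((⟨j+1, hj⟩ : Fin m) : ℕ) := by simp
    rw [dif_pos h1]
    have h2 : ((⟨(⟨j+1, hj⟩ : Fin m).val - 1, by omega⟩ : Fin m)) = ⟨j, by omega⟩ := by
      simp
    rw [h2]
    ring

noncomputable def csLinear (m : ℕ) : (Fin m → ℝ) ≃ₗ[ℝ] (Fin m → ℝ) where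
  toFun g := fun k => psum g (k.val + 1)
  invFun u := fun k => u k - (if h : 0 < k.val then u ⟨k.val - 1, by omega⟩ else 0)
  map_add' a b := by funext k; exact psum_add a b _
  map_smul' c a := by funext k; simpa using psum_smul c a _
  left_inv g := by
    funext k
    show psum g (k.val + 1) - _ = g k
    have hc := psum_component g k
    by_cases h : 0 < k.val
    · rw [dif_pos h]
      show psum g (k.val+1) - psum g (k.val - 1 + 1) = g k
      rw [show k.val - 1 + 1 = k.val by omega]
      linarith
    · rw [dif_neg h]
      have h0 : k.val = 0 := by omega
      rw [h0] at hc
      rw [psum_zero] at hc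
      have : psum g (k.val + 1) = psum g (0 + 1) := by rw [h0]
      rw [this]
      linarith
  right_inv u := by
    funext k
    have := ds_psum u k.val k.isLt
    simpa using this

lemma csLinear_apply {m : ℕ} (g : Fin m → ℝ) (k : Fin m) :
    csLinear m g k = psum g (k.val + 1) := rfl

lemma det_csLinear (m : ℕ) : LinearMap.det ((csLinear m) : (Fin m → ℝ) →ₗ[ℝ] (Fin m → ℝ)) = 1 := by
  rw [← LinearMap.det_toMatrix (Pi.basisFun ℝ (Fin m))]
  have hentry : ∀ k t : Fin m,
      (LinearMap.toMatrix (Pi.basisFun ℝ (Fin m)) (Pi.basisFun ℝ (Fin m))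
        ((csLinear m) : (Fin m → ℝ) →ₗ[ℝ] (Fin m → ℝ))) k t
      = if t.val ≤ k.val then (1:ℝ) else 0 := by
    intro k t
    rw [LinearMap.toMatrix_apply]
    simp only [Pi.basisFun_apply, Pi.basisFun_repr]
    rw [show ((csLinear m) : (Fin m → ℝ) →ₗ[ℝ] (Fin m → ℝ)) (Pi.single t 1) k
        = psum (Pi.single t (1:ℝ)) (k.val + 1) from rfl]
    rw [psum_eq_finsum]
    rw [Finset.sum_eq_single t]
    · by_cases h : t.val < k.val + 1
      · rw [if_pos h, if_pos (by omega)]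
        simp
      · rw [if_neg h, if_neg (by omega)]
    · intro t' _ ht'
      by_cases h : t'.val < k.val + 1
      · rw [if_pos h]
        rw [Pi.single_apply, if_neg (by intro hh; exact ht' hh)]
      · rw [if_neg h]
    · intro ht; exact absurd (Finset.mem_univ _) ht
  have htri : (LinearMap.toMatrix (Pi.basisFun ℝ (Fin m)) (Pi.basisFun ℝ (Fin m))
      ((csLinear m) : (Fin m → ℝ) →ₗ[ℝ] (Fin m → ℝ))).BlockTriangular OrderDual.toDual := by
    intro a b hab
    rw [hentry]
    rw [if_neg]
    have : a < b := hab
    omega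
  rw [Matrix.det_of_lowerTriangular _ htri]
  apply Finset.prod_eq_one
  intro k _
  rw [hentry, if_pos (le_refl _)]

noncomputable def csME (m : ℕ) : (Fin m → ℝ) ≃ᵐ (Fin m → ℝ) :=
  ((csLinear m).toContinuousLinearEquiv).toHomeomorph.toMeasurableEquiv

lemma csME_apply {m : ℕ} (g : Fin m → ℝ) (k : Fin m) :
    csME m g k = psum g (k.val + 1) := rfl

lemma csME_symm_apply {m : ℕ} (u : Fin m → ℝ) (k : Fin m) :
    (csME m).symm u k = u k - (if h : 0 < k.val then u ⟨k.val - 1, by omega⟩ else 0) := rfl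

lemma mp_csME (m : ℕ) : MeasurePreserving (⇑(csME m)) volume volume := by
  refine ⟨(csME m).measurable, ?_⟩
  have hdet : LinearMap.det ((csLinear m) : (Fin m → ℝ) →ₗ[ℝ] (Fin m → ℝ)) ≠ 0 := by
    rw [det_csLinear]; norm_num
  have := Real.map_linearMap_volume_pi_eq_smul_volume_pi hdet
  rw [det_csLinear] at this
  rw [show (⇑(csME m)) = ⇑(csLinear m) from rfl]
  simpa using this

lemma mp_csME_symm (m : ℕ) : MeasurePreserving (⇑(csME m).symm) volume volume :=
  (mp_csME m).symm (csME m)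

/-! ### the block permutation and the pattern map -/

variable {i : ℕ}

lemma cnt_lt_total {s : Fin n → Bool} {b : Bool} {k : Fin n} (hk : s k = b) :
    cnt s b k.val < cnt s b n := by
  have hstep : cnt s b (k.val + 1) = cnt s b k.val + 1 := by
    have h1 := cnt_succ s b k.isLt
    rw [show (⟨k.val, k.isLt⟩ : Fin n) = k from rfl, hk] at h1
    simpa using h1
  have := cnt_mono s b (show k.val + 1 ≤ n from k.isLt)
  omega

lemma cnt_false_total {s : Fin (2*i+2) → Bool} (bal : cnt s true (2*i+2) = i+1) :
    cnt s false (2*i+2) = i+1 := by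
  have := cnt_add s (le_refl (2*i+2))
  omega

lemma cnt_inj {s : Fin n → Bool} {b : Bool} {k k' : Fin n} (hk : s k = b) (hk' : s k' = b)
    (h : cnt s b k.val = cnt s b k'.val) : k = k' := by
  rcases lt_trichotomy k.val k'.val with hlt | heq | hlt
  · exfalso
    have hstep : cnt s b (k.val + 1) = cnt s b k.val + 1 := by
      have h1 := cnt_succ s b k.isLt
      rw [show (⟨k.val, k.isLt⟩ : Fin n) = k from rfl, hk] at h1
      simpa using h1
    have := cnt_mono s b (show k.val + 1 ≤ k'.val from hlt)
    omega
  · exact Fin.ext heq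
  · exfalso
    have hstep : cnt s b (k'.val + 1) = cnt s b k'.val + 1 := by
      have h1 := cnt_succ s b k'.isLt
      rw [show (⟨k'.val, k'.isLt⟩ : Fin n) = k' from rfl, hk'] at h1
      simpa using h1
    have := cnt_mono s b (show k'.val + 1 ≤ k.val from hlt)
    omega

/-- position `k` ↦ its index in the `(z₁,…,z_{i+1},w₁,…,w_{i+1})` ordering. -/
def blockOf (s : Fin (2*i+2) → Bool) (bal : cnt s true (2*i+2) = i+1) :
    Fin (2*i+2) → Fin (2*i+2) := fun k =>
  if h : s k = true then
    ⟨cnt s true k.val, by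
      have := cnt_lt_total h; omega⟩
  else
    ⟨i + 1 + cnt s false k.val, by
      have := cnt_lt_total (show s k = false by simpa using h)
      have := cnt_false_total bal
      omega⟩

lemma blockOf_inj (s : Fin (2*i+2) → Bool) (bal : cnt s true (2*i+2) = i+1) :
    Function.Injective (blockOf s bal) := by
  intro k k' h
  unfold blockOf at h
  by_cases h1 : s k = true <;> by_cases h2 : s k' = true
  · rw [dif_pos h1, dif_pos h2] at h
    exact cnt_inj h1 h2 (by simpa [Fin.ext_iff] using h)
  · rw [dif_pos h1, dif_neg h2] at h
    exfalso
    have hval : cnt s true k.val = i + 1 + cnt s false k'.val := by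
      simpa [Fin.ext_iff] using h
    have := cnt_lt_total h1
    rw [bal] at this
    omega
  · rw [dif_neg h1, dif_pos h2] at h
    exfalso
    have hval : i + 1 + cnt s false k.val = cnt s true k'.val := by
      simpa [Fin.ext_iff] using h
    have := cnt_lt_total h2
    rw [bal] at this
    omega
  · rw [dif_neg h1, dif_neg h2] at h
    refine cnt_inj (show s k = false by simpa using h1)
      (show s k' = false by simpa using h2) ?_
    have hval : i + 1 + cnt s false k.val = i + 1 + cnt s false k'.val := by
      simpa [Fin.ext_iff] using h
    omega

/-- the permutation sending a position to its block index. -/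
noncomputable def rho (s : Fin (2*i+2) → Bool) (bal : cnt s true (2*i+2) = i+1) :
    Equiv.Perm (Fin (2*i+2)) :=
  Equiv.ofBijective (blockOf s bal)
    ((Finite.injective_iff_bijective).1 (blockOf_inj s bal))

lemma rho_symm_spec_true (s : Fin (2*i+2) → Bool) (bal : cnt s true (2*i+2) = i+1)
    (m : Fin (2*i+2)) (hm : m.val < i+1) :
    s ((rho s bal).symm m) = true ∧ cnt s true ((rho s bal).symm m).val = m.val := by
  set k := (rho s bal).symm m with hk
  have hrk : blockOf s bal k = m := by
    have : rho s bal k = m := by rw [hk]; exact (rho s bal).apply_symm_apply m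
    exact this
  unfold blockOf at hrk
  by_cases h1 : s k = true
  · rw [dif_pos h1] at hrk
    exact ⟨h1, by simpa [Fin.ext_iff] using hrk⟩
  · rw [dif_neg h1] at hrk
    exfalso
    have : i + 1 + cnt s false k.val = m.val := by simpa [Fin.ext_iff] using hrk
    omega

lemma rho_symm_spec_false (s : Fin (2*i+2) → Bool) (bal : cnt s true (2*i+2) = i+1)
    (m : Fin (2*i+2)) (hm : i+1 ≤ m.val) :
    s ((rho s bal).symm m) = false ∧
      cnt s false ((rho s bal).symm m).val = m.val - (i+1) := by
  set k := (rho s bal).symm m with hk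
  have hrk : blockOf s bal k = m := (rho s bal).apply_symm_apply m
  unfold blockOf at hrk
  by_cases h1 : s k = true
  · rw [dif_pos h1] at hrk
    exfalso
    have : cnt s true k.val = m.val := by simpa [Fin.ext_iff] using hrk
    have := cnt_lt_total h1
    rw [bal] at this
    omega
  · rw [dif_neg h1] at hrk
    refine ⟨by simpa using h1, ?_⟩
    have : i + 1 + cnt s false k.val = m.val := by simpa [Fin.ext_iff] using hrk
    omega

/-- the index equivalence `Fin (i+1) ⊕ Fin (i+1) ≃ Fin (2i+2)` adapted to `s`:
block coordinates to positions. -/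
noncomputable def idxE (s : Fin (2*i+2) → Bool) (bal : cnt s true (2*i+2) = i+1) :
    (Fin (i+1) ⊕ Fin (i+1)) ≃ Fin (2*i+2) :=
  (finSumFinEquiv.trans (finCongr (by omega))).trans (rho s bal).symm

lemma idxE_inl (s : Fin (2*i+2) → Bool) (bal : cnt s true (2*i+2) = i+1) (j : Fin (i+1)) :
    idxE s bal (Sum.inl j) = (rho s bal).symm ⟨j.val, by omega⟩ := by
  unfold idxE
  simp only [Equiv.trans_apply]
  congr 1

lemma idxE_inr (s : Fin (2*i+2) → Bool) (bal : cnt s true (2*i+2) = i+1) (j : Fin (i+1)) :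
    idxE s bal (Sum.inr j) = (rho s bal).symm ⟨i + 1 + j.val, by omega⟩ := by
  unfold idxE
  simp only [Equiv.trans_apply]
  congr 1

lemma cnt_step {s : Fin n → Bool} {b : Bool} {k : Fin n} (hk : s k = b) :
    cnt s b (k.val + 1) = cnt s b k.val + 1 := by
  have h1 := cnt_succ s b k.isLt
  rw [show (⟨k.val, k.isLt⟩ : Fin n) = k from rfl, hk] at h1
  simpa using h1

lemma cnt_skip {s : Fin n → Bool} {b : Bool} {k : Fin n} (hk : s k ≠ b) :
    cnt s b (k.val + 1) = cnt s b k.val := by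
  have h1 := cnt_succ s b k.isLt
  rw [show (⟨k.val, k.isLt⟩ : Fin n) = k from rfl] at h1
  rw [if_neg hk] at h1
  omega

/-- the full measurable equivalence `gaps ↦ (z,w)` attached to a balanced pattern. -/
noncomputable def Psi (s : Fin (2*i+2) → Bool) (bal : cnt s true (2*i+2) = i+1) :
    (Fin (2*i+2) → ℝ) ≃ᵐ ((Fin (i+1) → ℝ) × (Fin (i+1) → ℝ)) :=
  (csME (2*i+2)).trans <|
    ((MeasurableEquiv.piCongrLeft (fun _ : Fin (2*i+2) => ℝ) (idxE s bal)).symm).trans <|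
      (MeasurableEquiv.sumPiEquivProdPi (fun _ : Fin (i+1) ⊕ Fin (i+1) => ℝ)).trans <|
        MeasurableEquiv.prodCongr (csME (i+1)).symm (csME (i+1)).symm

lemma mp_Psi (s : Fin (2*i+2) → Bool) (bal : cnt s true (2*i+2) = i+1) :
    MeasurePreserving (⇑(Psi s bal)) volume volume := by
  have h1 := mp_csME (2*i+2)
  have h2 : MeasurePreserving
      (⇑(MeasurableEquiv.piCongrLeft (fun _ : Fin (2*i+2) => ℝ) (idxE s bal)).symm)
      volume volume :=
    (volume_measurePreserving_piCongrLeft (fun _ : Fin (2*i+2) => ℝ) (idxE s bal)).symm _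
  have h3 := volume_measurePreserving_sumPiEquivProdPi
      (fun _ : Fin (i+1) ⊕ Fin (i+1) => ℝ)
  have h4 : MeasurePreserving
      (⇑(MeasurableEquiv.prodCongr (csME (i+1)).symm (csME (i+1)).symm))
      volume volume := by
    have := (mp_csME_symm (i+1)).prod (mp_csME_symm (i+1))
    rw [← MeasureTheory.Measure.volume_eq_prod] at this
    exact this
  exact ((h4.comp h3).comp h2).comp h1

/-- the pattern map : gap `g k` is added to the `z`-coordinate indexed by the number of
`z`-slots before `k`, and to the `w`-coordinate indexed by the number of `w`-slots before
`k`. -/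
def phi (s : Fin (2*i+2) → Bool) (g : Fin (2*i+2) → ℝ) :
    (Fin (i+1) → ℝ) × (Fin (i+1) → ℝ) :=
  (fun j => ∑ k : Fin (2*i+2), if cnt s true k.val = j.val then g k else 0,
   fun j => ∑ k : Fin (2*i+2), if cnt s false k.val = j.val then g k else 0)

lemma Ssum_zero (s : Fin n → Bool) (b : Bool) (g : Fin n → ℝ) : Ssum s b 0 g = 0 := by
  unfold Ssum
  simp

lemma phi_fst (s : Fin (2*i+2) → Bool) (g : Fin (2*i+2) → ℝ) (j : Fin (i+1)) :
    (phi s g).1 j = Ssum s true (j.val+1) g - Ssum s true j.val g := by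
  unfold phi Ssum
  simp only
  rw [← Finset.sum_sub_distrib]
  apply Finset.sum_congr rfl
  intro k _
  rcases lt_trichotomy (cnt s true k.val) j.val with h|h|h
  · rw [if_neg (by omega), if_pos (by omega), if_pos h]; ring
  · rw [if_pos h, if_pos (by omega), if_neg (by omega)]; ring
  · rw [if_neg (by omega), if_neg (by omega), if_neg (by omega)]; ring

lemma phi_snd (s : Fin (2*i+2) → Bool) (g : Fin (2*i+2) → ℝ) (j : Fin (i+1)) :
    (phi s g).2 j = Ssum s false (j.val+1) g - Ssum s false j.val g := by
  unfold phi Ssum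
  simp only
  rw [← Finset.sum_sub_distrib]
  apply Finset.sum_congr rfl
  intro k _
  rcases lt_trichotomy (cnt s false k.val) j.val with h|h|h
  · rw [if_neg (by omega), if_pos (by omega), if_pos h]; ring
  · rw [if_pos h, if_pos (by omega), if_neg (by omega)]; ring
  · rw [if_neg (by omega), if_neg (by omega), if_neg (by omega)]; ring

lemma Pref_eq_psum (K : ℕ) (g : Fin n → ℝ) : Pref K g = psum g K :=
  (psum_eq_finsum g K).symm

lemma Ssum_true_eq_u (s : Fin (2*i+2) → Bool) (bal : cnt s true (2*i+2) = i+1)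
    (g : Fin (2*i+2) → ℝ) (m : ℕ) (hm : m < i+1) :
    Ssum s true (m+1) g = psum g (((rho s bal).symm ⟨m, by omega⟩).val + 1) := by
  obtain ⟨hl, hc⟩ := rho_symm_spec_true s bal ⟨m, by omega⟩ (by simpa using hm)
  set k := (rho s bal).symm (⟨m, by omega⟩ : Fin (2*i+2)) with hkdef
  have hstep : cnt s true (k.val+1) = m + 1 := by
    rw [cnt_step hl, hc]
  have hL : Lpos s true (m+1) = k.val + 1 := Lpos_eq_of s true k.isLt hl hstep
  rw [Ssum_eq_Pref, hL, Pref_eq_psum]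

lemma Ssum_false_eq_u (s : Fin (2*i+2) → Bool) (bal : cnt s true (2*i+2) = i+1)
    (g : Fin (2*i+2) → ℝ) (m : ℕ) (hm : m < i+1) :
    Ssum s false (m+1) g = psum g (((rho s bal).symm ⟨i+1+m, by omega⟩).val + 1) := by
  obtain ⟨hl, hc⟩ := rho_symm_spec_false s bal ⟨i+1+m, by omega⟩ (by simp)
  set k := (rho s bal).symm (⟨i+1+m, by omega⟩ : Fin (2*i+2)) with hkdef
  have hc' : cnt s false k.val = m := by
    rw [hc]; simp
  have hstep : cnt s false (k.val+1) = m + 1 := by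
    rw [cnt_step hl, hc']
  have hL : Lpos s false (m+1) = k.val + 1 := Lpos_eq_of s false k.isLt hl hstep
  rw [Ssum_eq_Pref, hL, Pref_eq_psum]

lemma phi_eq_Psi (s : Fin (2*i+2) → Bool) (bal : cnt s true (2*i+2) = i+1) :
    phi s = ⇑(Psi s bal) := by
  funext g
  have hfst : ∀ j : Fin (i+1), (Psi s bal g).1 j
      = csME (2*i+2) g (idxE s bal (Sum.inl j))
        - (if h : 0 < j.val then
            csME (2*i+2) g (idxE s bal (Sum.inl ⟨j.val - 1, by omega⟩)) else 0) := by
    intro j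
    rfl
  have hsnd : ∀ j : Fin (i+1), (Psi s bal g).2 j
      = csME (2*i+2) g (idxE s bal (Sum.inr j))
        - (if h : 0 < j.val then
            csME (2*i+2) g (idxE s bal (Sum.inr ⟨j.val - 1, by omega⟩)) else 0) := by
    intro j
    rfl
  have key1 : ∀ (m : ℕ) (hm : m < i+1),
      Ssum s true (m+1) g = csME (2*i+2) g (idxE s bal (Sum.inl ⟨m, hm⟩)) := by
    intro m hm
    rw [idxE_inl, csME_apply]
    exact Ssum_true_eq_u s bal g m hm
  have key2 : ∀ (m : ℕ) (hm : m < i+1),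
      Ssum s false (m+1) g = csME (2*i+2) g (idxE s bal (Sum.inr ⟨m, hm⟩)) := by
    intro m hm
    rw [idxE_inr, csME_apply]
    exact Ssum_false_eq_u s bal g m hm
  have h1 : (phi s g).1 = (Psi s bal g).1 := by
    funext j
    rw [phi_fst, hfst j, ← key1 j.val j.isLt]
    by_cases h : 0 < j.val
    · rw [dif_pos h, ← key1 (j.val - 1) (by omega)]
      congr 2
      omega
    · rw [dif_neg h, show j.val = 0 by omega, Ssum_zero]
  have h2 : (phi s g).2 = (Psi s bal g).2 := by
    funext j
    rw [phi_snd, hsnd j, ← key2 j.val j.isLt]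
    by_cases h : 0 < j.val
    · rw [dif_pos h, ← key2 (j.val - 1) (by omega)]
      congr 2
      omega
    · rw [dif_neg h, show j.val = 0 by omega, Ssum_zero]
  exact Prod.ext h1 h2

/-! ### patterns versus bounded Dyck paths -/

lemma pathHeight_eq_cnt {m : ℕ} (d : Fin m → Bool) (j : ℕ) :
    pathHeight d j = (cnt d true j : ℤ) - (cnt d false j : ℤ) := by
  induction j with
  | zero => simp [pathHeight, cnt]
  | succ j ih =>
    rw [pathHeight, Finset.sum_range_succ, ← pathHeight, ih]
    by_cases hj : j < m
    · rw [dif_pos hj]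
      have h1 := cnt_succ d true hj
      have h2 := cnt_succ d false hj
      cases hd : d ⟨j, hj⟩ <;> (simp [hd] at h1 h2 ⊢; push_cast; omega)
    · rw [dif_neg hj]
      have h1 : cnt d true (j+1) = cnt d true j := by
        rw [cnt_stab d true (show m ≤ j+1 by omega), cnt_stab d true (le_of_not_gt hj)]
      have h2 : cnt d false (j+1) = cnt d false j := by
        rw [cnt_stab d false (show m ≤ j+1 by omega), cnt_stab d false (le_of_not_gt hj)]
      rw [h1, h2, add_zero]

/-- the pattern attached to a Dyck word : negated letters, then a `z`-slot, then a
`w`-slot. -/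
def sOf {i : ℕ} (d : Fin (2*i) → Bool) : Fin (2*i+2) → Bool := fun k =>
  if h : k.val < 2*i then !(d ⟨k.val, h⟩) else decide (k.val = 2*i)

lemma sOf_lt {i : ℕ} (d : Fin (2*i) → Bool) (k : ℕ) (hk : k < 2*i) :
    sOf d ⟨k, by omega⟩ = !(d ⟨k, hk⟩) := by
  simp [sOf, hk]

lemma sOf_2i {i : ℕ} (d : Fin (2*i) → Bool) : sOf d ⟨2*i, by omega⟩ = true := by
  simp [sOf]

lemma sOf_2i1 {i : ℕ} (d : Fin (2*i) → Bool) : sOf d ⟨2*i+1, by omega⟩ = false := by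
  simp [sOf]

/-- counts transfer along letterwise negation. -/
lemma cnt_swap {m n : ℕ} (hmn : m ≤ n) (s : Fin n → Bool) (d : Fin m → Bool)
    (hrel : ∀ (k : ℕ) (hk : k < m), s ⟨k, by omega⟩ = !(d ⟨k, hk⟩)) :
    ∀ k, k ≤ m → cnt s true k = cnt d false k ∧ cnt s false k = cnt d true k := by
  intro k
  induction k with
  | zero => intro _; simp [cnt]
  | succ k ih =>
    intro hk
    obtain ⟨h1, h2⟩ := ih (by omega)
    have hkm : k < m := by omega
    have hkn : k < n := by omega
    have hs1 := cnt_succ s true hkn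
    have hs2 := cnt_succ s false hkn
    have hd1 := cnt_succ d true hkm
    have hd2 := cnt_succ d false hkm
    have hrelk := hrel k hkm
    constructor
    · rw [hs1, hd2, h1]
      congr 1
      cases hdk : d ⟨k, hkm⟩ <;> simp [hdk] at hrelk ⊢ <;> simp [hrelk]
    · rw [hs2, hd1, h2]
      congr 1
      cases hdk : d ⟨k, hkm⟩ <;> simp [hdk] at hrelk ⊢ <;> simp [hrelk]

section Dyck

variable {i q : ℕ}

/-- the bounded-Dyck property, as in `boundedDyck`. -/
def DyckP (i h : ℕ) (d : Fin (2*i) → Bool) : Prop :=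
  (∀ j ≤ 2*i, 0 ≤ pathHeight d j ∧ pathHeight d j ≤ (h : ℤ)) ∧ pathHeight d (2*i) = 0

/-- validity of a pattern : balanced + the three families of `Lpos` comparisons. -/
def Valid (i q : ℕ) (s : Fin (2*i+2) → Bool) : Prop :=
  cnt s true (2*i+2) = i+1 ∧
  (∀ j, 1 ≤ j → j ≤ i → Lpos s false j ≤ Lpos s true j) ∧
  Lpos s true (i+1) < Lpos s false (i+1) ∧
  (∀ j, 1 ≤ j → j + q ≤ i + 2 → Lpos s true j < Lpos s false (j + q - 2))

lemma dyck_total {d : Fin (2*i) → Bool} (hd : DyckP i (q-2) d) :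
    cnt d true (2*i) = i ∧ cnt d false (2*i) = i := by
  have h0 := hd.2
  rw [pathHeight_eq_cnt] at h0
  have := cnt_add d (le_refl (2*i))
  omega

lemma cnt_sOf {d : Fin (2*i) → Bool} :
    ∀ k, k ≤ 2*i → cnt (sOf d) true k = cnt d false k ∧ cnt (sOf d) false k = cnt d true k :=
  cnt_swap (by omega) (sOf d) d (fun k hk => sOf_lt d k hk)

lemma cnt_sOf_top {d : Fin (2*i) → Bool} (hd : DyckP i (q-2) d) :
    cnt (sOf d) true (2*i+1) = i + 1 ∧ cnt (sOf d) false (2*i+1) = i ∧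
    cnt (sOf d) true (2*i+2) = i + 1 ∧ cnt (sOf d) false (2*i+2) = i + 1 := by
  obtain ⟨ht, hf⟩ := dyck_total hd
  obtain ⟨h1, h2⟩ := cnt_sOf (d := d) (2*i) (le_refl _)
  have s1 : cnt (sOf d) true (2*i+1) = i + 1 := by
    have h := cnt_step (s := sOf d) (b := true) (k := ⟨2*i, by omega⟩) (sOf_2i d)
    have h' : cnt (sOf d) true (2*i+1) = cnt (sOf d) true (2*i) + 1 := h
    omega
  have s2 : cnt (sOf d) false (2*i+1) = i := by
    have h := cnt_skip (s := sOf d) (b := false) (k := ⟨2*i, by omega⟩)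
      (by rw [sOf_2i d]; simp)
    have h' : cnt (sOf d) false (2*i+1) = cnt (sOf d) false (2*i) := h
    omega
  have s3 : cnt (sOf d) true (2*i+2) = i+1 := by
    have h := cnt_skip (s := sOf d) (b := true) (k := ⟨2*i+1, by omega⟩)
      (by rw [sOf_2i1 d]; simp)
    have h' : cnt (sOf d) true (2*i+2) = cnt (sOf d) true (2*i+1) := h
    omega
  have s4 : cnt (sOf d) false (2*i+2) = i+1 := by
    have h := cnt_step (s := sOf d) (b := false) (k := ⟨2*i+1, by omega⟩) (sOf_2i1 d)
    have h' : cnt (sOf d) false (2*i+2) = cnt (sOf d) false (2*i+1) + 1 := h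
    omega
  exact ⟨s1, s2, s3, s4⟩

lemma valid_of_dyck (hq : 2 ≤ q) {d : Fin (2*i) → Bool} (hd : DyckP i (q-2) d) :
    Valid i q (sOf d) := by
  obtain ⟨ht, hf⟩ := dyck_total hd
  obtain ⟨s1, s2, s3, s4⟩ := cnt_sOf_top hd
  have hH : ∀ k, k ≤ 2*i → cnt d false k ≤ cnt d true k ∧
      cnt d true k ≤ cnt d false k + (q-2) := by
    intro k hk
    have := (hd.1 k hk)
    rw [pathHeight_eq_cnt] at this
    omega
  refine ⟨s3, ?_, ?_, ?_⟩
  · -- V1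
    intro j hj1 hji
    rw [Lpos_le_iff]
    intro k hk
    by_cases hk2 : k.val ≤ 2*i
    · obtain ⟨c1, c2⟩ := cnt_sOf (d := d) k.val hk2
      rw [c2] at hk
      rw [c1]
      have := (hH k.val hk2).1
      omega
    · have hk3 : k.val = 2*i+1 := by have := k.isLt; omega
      rw [hk3] at hk ⊢
      omega
  · -- V2
    have hL1 : Lpos (sOf d) true (i+1) = 2*i + 1 := by
      apply Lpos_eq_of (sOf d) true (p := 2*i) (by omega) (sOf_2i d)
      exact s1
    have hL2 : Lpos (sOf d) false (i+1) = 2*i + 2 := by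
      apply Lpos_eq_of (sOf d) false (p := 2*i+1) (by omega) (sOf_2i1 d)
      exact s4
    omega
  · -- V3
    intro j hj1 hjq
    have hne : Lpos (sOf d) true j ≠ Lpos (sOf d) false (j + q - 2) := by
      apply Lpos_ne (sOf d) (by simp) hj1 (by omega) (by omega) (by omega)
    have hle : Lpos (sOf d) true j ≤ Lpos (sOf d) false (j + q - 2) := by
      rw [Lpos_le_iff]
      intro k hk
      by_cases hk2 : k.val ≤ 2*i
      · obtain ⟨c1, c2⟩ := cnt_sOf (d := d) k.val hk2
        rw [c1] at hk
        rw [c2]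
        have := (hH k.val hk2).2
        omega
      · have hk3 : k.val = 2*i+1 := by have := k.isLt; omega
        rw [hk3] at hk
        rw [s1] at hk
        omega
    omega

lemma sOf_inj : Function.Injective (sOf : (Fin (2*i) → Bool) → (Fin (2*i+2) → Bool)) := by
  intro d d' h
  funext k
  have hck := congrFun h ⟨k.val, by omega⟩
  rw [sOf_lt d k.val k.isLt, sOf_lt d' k.val k.isLt] at hck
  have : d ⟨k.val, k.isLt⟩ = d' ⟨k.val, k.isLt⟩ := by
    cases hdk : d ⟨k.val, k.isLt⟩ <;> cases hdk' : d' ⟨k.val, k.isLt⟩ <;>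
      simp [hdk, hdk'] at hck ⊢
  exact this

lemma dyck_of_valid (hq : 2 ≤ q) {s : Fin (2*i+2) → Bool} (hv : Valid i q s) :
    ∃ d : Fin (2*i) → Bool, DyckP i (q-2) d ∧ sOf d = s := by
  obtain ⟨bal, V1, V2, V3⟩ := hv
  have balF : cnt s false (2*i+2) = i+1 := cnt_false_total bal
  have hlast : s ⟨2*i+1, by omega⟩ = false := by
    by_contra hc
    have hc' : s ⟨2*i+1, by omega⟩ = true := by simpa using hc
    have hstep := cnt_step (b := true) (k := (⟨2*i+1, by omega⟩ : Fin (2*i+2))) hc'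
    have hstep' : cnt s true (2*i+2) = cnt s true (2*i+1) + 1 := hstep
    have h1 : cnt s true (2*i+1) < i+1 := by omega
    have h2 : (2*i+1 : ℕ) < Lpos s true (i+1) :=
      (lt_Lpos_iff s true (i+1) ⟨2*i+1, by omega⟩).2 h1
    have := Lpos_le s false (i+1)
    omega
  have h2i : s ⟨2*i, by omega⟩ = true := by
    by_contra hc
    have hc' : s ⟨2*i, by omega⟩ = false := by simpa using hc
    obtain ⟨hplt, hletter, hcnt⟩ := letter_Lpos s true (show 1 ≤ i+1 by omega) (by rw [bal])
    set p := Lpos s true (i+1) with hpdef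
    have hppos : 0 < p := Lpos_pos s true (by omega) (by omega)
    have hple2 : p ≤ 2*i+2 := Lpos_le s true (i+1)
    have hne1 : p - 1 ≠ 2*i+1 := by
      intro h
      rw [show (⟨p-1, hplt⟩ : Fin (2*i+2)) = ⟨2*i+1, by omega⟩ from Fin.ext h] at hletter
      rw [hlast] at hletter
      exact Bool.false_ne_true hletter
    have hne2 : p - 1 ≠ 2*i := by
      intro h
      rw [show (⟨p-1, hplt⟩ : Fin (2*i+2)) = ⟨2*i, by omega⟩ from Fin.ext h] at hletter
      rw [hc'] at hletter
      exact Bool.false_ne_true hletter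
    have hple : p ≤ 2*i := by omega
    have hpge : i+1 ≤ p := by
      have := cnt_le s true p
      omega
    have hcF : cnt s false p = p - (i+1) := by
      have := cnt_add s (show p ≤ 2*i+2 by omega)
      omega
    have hcFp : cnt s false (p-1) = p - (i+1) := by
      have h2 := cnt_skip (b := false) (k := (⟨p-1, by omega⟩ : Fin (2*i+2)))
        (show s ⟨p-1, by omega⟩ ≠ false by rw [hletter]; simp)
      have h2' : cnt s false (p-1+1) = cnt s false (p-1) := h2
      rw [show p-1+1 = p by omega] at h2'
      omega
    have hcTp : cnt s true (p-1) = i := by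
      have h := cnt_step (b := true) (k := (⟨p-1, by omega⟩ : Fin (2*i+2))) hletter
      have h' : cnt s true (p-1+1) = cnt s true (p-1) + 1 := h
      rw [show p-1+1 = p by omega] at h'
      omega
    have hV1 := V1 (p - i) (by omega) (by omega)
    rw [Lpos_le_iff] at hV1
    have happ := hV1 ⟨p-1, by omega⟩
      (show cnt s false (p-1) < p - i by omega)
    have happ' : cnt s true (p-1) < p - i := happ
    omega
  -- totals at 2*i
  have hT2i : cnt s true (2*i) = i := by
    have ha := cnt_step (b := true) (k := (⟨2*i, by omega⟩ : Fin (2*i+2))) h2i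
    have ha' : cnt s true (2*i+1) = cnt s true (2*i) + 1 := ha
    have hb := cnt_skip (b := true) (k := (⟨2*i+1, by omega⟩ : Fin (2*i+2)))
      (show s ⟨2*i+1, by omega⟩ ≠ true by rw [hlast]; simp)
    have hb' : cnt s true (2*i+2) = cnt s true (2*i+1) := hb
    omega
  have hF2i : cnt s false (2*i) = i := by
    have := cnt_add s (show 2*i ≤ 2*i+2 by omega)
    omega
  -- heights
  have hH : ∀ k, k ≤ 2*i →
      cnt s true k ≤ cnt s false k ∧ cnt s false k ≤ cnt s true k + (q-2) := by
    intro k hk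
    constructor
    · by_contra hcon
      push_neg at hcon
      have hc1 : 1 ≤ cnt s true k := by omega
      have hc2 : cnt s true k ≤ i := by
        have := cnt_mono s true (show k ≤ 2*i from hk)
        omega
      have hV1 := V1 (cnt s true k) hc1 hc2
      rw [Lpos_le_iff] at hV1
      have happ := hV1 ⟨k, by omega⟩ (show cnt s false k < cnt s true k from hcon)
      have happ' : cnt s true k < cnt s true k := happ
      omega
    · by_contra hcon
      push_neg at hcon
      have hFk : cnt s false k ≤ i := by
        have := cnt_mono s false (show k ≤ 2*i from hk)
        omega
      have hjq : cnt s true k + 1 + q ≤ i + 2 := by omega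
      have hv3 := V3 (cnt s true k + 1) (by omega) hjq
      have hk1 : k < Lpos s true (cnt s true k + 1) :=
        (lt_Lpos_iff' s true _ (show k < 2*i+2 by omega)).2
          (show cnt s true k < cnt s true k + 1 by omega)
      have hk2 : cnt s false k < cnt s true k + 1 + q - 2 :=
        (lt_Lpos_iff' s false _ (show k < 2*i+2 by omega)).1 (by omega)
      omega
  refine ⟨fun k => !(s ⟨k.val, by omega⟩), ⟨?_, ?_⟩, ?_⟩
  · intro j hj
    obtain ⟨c1, c2⟩ := cnt_swap (by omega) s (fun k : Fin (2*i) => !(s ⟨k.val, by omega⟩))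
      (fun k hk => by simp) j hj
    have := hH j hj
    rw [pathHeight_eq_cnt]
    constructor
    · omega
    · omega
  · rw [pathHeight_eq_cnt]
    obtain ⟨c1, c2⟩ := cnt_swap (by omega) s (fun k : Fin (2*i) => !(s ⟨k.val, by omega⟩))
      (fun k hk => by simp) (2*i) (le_refl _)
    omega
  · funext k
    have hklt := k.isLt
    by_cases hk : k.val < 2*i
    · have h1 := sOf_lt (fun k : Fin (2*i) => !(s ⟨k.val, by omega⟩)) k.val hk
      rw [show (⟨k.val, by omega⟩ : Fin (2*i+2)) = k from rfl] at h1
      rw [h1]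
      simp
    · rcases (show k.val = 2*i ∨ k.val = 2*i+1 by omega) with h | h
      · rw [show k = ⟨2*i, by omega⟩ from Fin.ext h]
        rw [sOf_2i, h2i]
      · rw [show k = ⟨2*i+1, by omega⟩ from Fin.ext h]
        rw [sOf_2i1, hlast]

/-! ### pattern uniqueness and the forward inclusion -/

lemma cnt_congr {s s' : Fin n → Bool} {K : ℕ} (h : ∀ t : Fin n, t.val < K → s t = s' t)
    (b : Bool) : cnt s b K = cnt s' b K := by
  unfold cnt
  congr 1
  apply Finset.filter_congr
  intro t _
  constructor
  · rintro ⟨h1, h2⟩; exact ⟨h1, (h t h1) ▸ h2⟩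
  · rintro ⟨h1, h2⟩; exact ⟨h1, (h t h1).symm ▸ h2⟩

lemma psum_phi_fst (s : Fin (2*i+2) → Bool) (g : Fin (2*i+2) → ℝ) :
    ∀ j, j ≤ i+1 → psum (phi s g).1 j = Ssum s true j g := by
  intro j
  induction j with
  | zero => intro _; rw [psum_zero, Ssum_zero]
  | succ j ih =>
    intro hj
    rw [psum_succ, ih (by omega), dif_pos (show j < i+1 by omega)]
    have h2 : (phi s g).1 ⟨j, show j < i+1 by omega⟩
        = Ssum s true (j+1) g - Ssum s true j g := phi_fst s g ⟨j, by omega⟩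
    rw [h2]
    ring

lemma psum_phi_snd (s : Fin (2*i+2) → Bool) (g : Fin (2*i+2) → ℝ) :
    ∀ j, j ≤ i+1 → psum (phi s g).2 j = Ssum s false j g := by
  intro j
  induction j with
  | zero => intro _; rw [psum_zero, Ssum_zero]
  | succ j ih =>
    intro hj
    rw [psum_succ, ih (by omega), dif_pos (show j < i+1 by omega)]
    have h2 : (phi s g).2 ⟨j, show j < i+1 by omega⟩
        = Ssum s false (j+1) g - Ssum s false j g := phi_snd s g ⟨j, by omega⟩
    rw [h2]
    ring

lemma pattern_unique_aux {s s' : Fin (2*i+2) → Bool}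
    (bal : cnt s true (2*i+2) = i+1) (bal' : cnt s' true (2*i+2) = i+1)
    {g g' : Fin (2*i+2) → ℝ} (hg : ∀ k, 0 < g k) (hg' : ∀ k, 0 < g' k)
    (heq : phi s g = phi s' g') (k₀ : Fin (2*i+2))
    (hpre : ∀ t : Fin (2*i+2), t.val < k₀.val → s t = s' t)
    (hs : s k₀ = true) (hs' : s' k₀ = false) : False := by
  have balF : cnt s false (2*i+2) = i+1 := cnt_false_total bal
  have balF' : cnt s' false (2*i+2) = i+1 := cnt_false_total bal'
  set a := cnt s true k₀.val with ha
  set b := cnt s false k₀.val with hb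
  have hcc : ∀ c : Bool, cnt s c k₀.val = cnt s' c k₀.val := fun c => cnt_congr hpre c
  -- step counts
  have hsT : cnt s true (k₀.val+1) = a + 1 := cnt_step hs
  have hsF : cnt s false (k₀.val+1) = b := cnt_skip (by rw [hs]; simp)
  have hs'F : cnt s' false (k₀.val+1) = b + 1 := by
    have := cnt_step hs'
    rw [← hcc false] at this
    exact this
  have hs'T : cnt s' true (k₀.val+1) = a := by
    have := cnt_skip (show s' k₀ ≠ true by rw [hs']; simp)
    rw [← hcc true] at this
    exact this
  -- bounds
  have haB : a + 1 ≤ i + 1 := by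
    have := cnt_mono s true (show k₀.val + 1 ≤ 2*i+2 by have := k₀.isLt; omega)
    omega
  have hbB : b + 1 ≤ i + 1 := by
    have := cnt_mono s' false (show k₀.val + 1 ≤ 2*i+2 by have := k₀.isLt; omega)
    omega
  -- in s : the (a+1)-th true is at position k₀, the (b+1)-th false is later
  have hLsT : Lpos s true (a+1) = k₀.val + 1 := Lpos_eq_of s true k₀.isLt hs hsT
  have hk1n : k₀.val + 1 < 2*i+2 := by
    by_contra hcon
    have hk2 : k₀.val + 1 = 2*i+2 := by have := k₀.isLt; omega
    rw [hk2] at hsF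
    omega
  have hLsF : k₀.val + 1 < Lpos s false (b+1) :=
    (lt_Lpos_iff' s false (b+1) hk1n).2 (by omega)
  have h1 : psum (phi s g).1 (a+1) < psum (phi s g).2 (b+1) := by
    rw [psum_phi_fst s g _ haB, psum_phi_snd s g _ hbB]
    exact Ssum_lt_Ssum (by omega) hg
  -- in s' : the (b+1)-th false is at position k₀, the (a+1)-th true is later
  have hLs'F : Lpos s' false (b+1) = k₀.val + 1 := Lpos_eq_of s' false k₀.isLt hs' hs'F
  have hk1n' : k₀.val + 1 < 2*i+2 := hk1n
  have hLs'T : k₀.val + 1 < Lpos s' true (a+1) :=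
    (lt_Lpos_iff' s' true (a+1) hk1n').2 (by omega)
  have h2 : psum (phi s' g').2 (b+1) < psum (phi s' g').1 (a+1) := by
    rw [psum_phi_fst s' g' _ haB, psum_phi_snd s' g' _ hbB]
    exact Ssum_lt_Ssum (by omega) hg'
  rw [heq] at h1
  linarith

lemma pattern_unique {s s' : Fin (2*i+2) → Bool}
    (bal : cnt s true (2*i+2) = i+1) (bal' : cnt s' true (2*i+2) = i+1)
    {g g' : Fin (2*i+2) → ℝ} (hg : ∀ k, 0 < g k) (hg' : ∀ k, 0 < g' k)
    (heq : phi s g = phi s' g') : s = s' := by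
  by_contra hne
  have hDne : (Finset.univ.filter fun t : Fin (2*i+2) => s t ≠ s' t).Nonempty := by
    by_contra hD
    rw [Finset.not_nonempty_iff_eq_empty] at hD
    apply hne
    funext t
    by_contra hc
    have : t ∈ Finset.univ.filter fun t : Fin (2*i+2) => s t ≠ s' t := by
      simp [hc]
    rw [hD] at this
    exact absurd this (Finset.notMem_empty t)
  set k₀ := (Finset.univ.filter fun t : Fin (2*i+2) => s t ≠ s' t).min' hDne with hk₀
  have hmem := (Finset.univ.filter fun t : Fin (2*i+2) => s t ≠ s' t).min'_mem hDne
  rw [Finset.mem_filter] at hmem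
  have hk₀ne : s k₀ ≠ s' k₀ := hmem.2
  have hpre : ∀ t : Fin (2*i+2), t.val < k₀.val → s t = s' t := by
    intro t ht
    by_contra hc
    have hle := Finset.min'_le (Finset.univ.filter fun t : Fin (2*i+2) => s t ≠ s' t) t
      (Finset.mem_filter.2 ⟨Finset.mem_univ t, hc⟩)
    rw [Fin.le_def] at hle
    omega
  cases hsv : s k₀
  · have hsv' : s' k₀ = true := by
      cases hv' : s' k₀
      · rw [hsv, hv'] at hk₀ne; exact (hk₀ne rfl).elim
      · rfl
    exact pattern_unique_aux bal' bal hg' hg heq.symm k₀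
      (fun t ht => (hpre t ht).symm) hsv' hsv
  · have hsv' : s' k₀ = false := by
      cases hv' : s' k₀
      · rfl
      · rw [hsv, hv'] at hk₀ne; exact (hk₀ne rfl).elim
    exact pattern_unique_aux bal bal' hg hg' heq k₀ hpre hsv hsv'

lemma phi_mem_K (hq : 2 ≤ q) {s : Fin (2*i+2) → Bool} (hv : Valid i q s)
    {g : Fin (2*i+2) → ℝ} (hg : ∀ k, 0 < g k) :
    phi s g ∈ KconeQ i q := by
  obtain ⟨bal, V1, V2, V3⟩ := hv
  refine ⟨?_, ?_, ?_, ?_, ?_⟩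
  · intro j
    show (0:ℝ) ≤ ∑ k : Fin (2*i+2), if cnt s true k.val = j.val then g k else 0
    apply Finset.sum_nonneg
    intro k _
    split_ifs
    · exact le_of_lt (hg k)
    · exact le_rfl
  · intro j
    show (0:ℝ) ≤ ∑ k : Fin (2*i+2), if cnt s false k.val = j.val then g k else 0
    apply Finset.sum_nonneg
    intro k _
    split_ifs
    · exact le_of_lt (hg k)
    · exact le_rfl
  · intro j hj1 hji
    rw [psum_phi_snd s g _ (by omega), psum_phi_fst s g _ (by omega)]
    exact Ssum_le_Ssum (V1 j hj1 hji) (fun k => le_of_lt (hg k))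
  · rw [psum_phi_fst s g _ (le_refl _), psum_phi_snd s g _ (le_refl _)]
    exact Ssum_lt_Ssum V2 hg
  · intro j hj1 hjq
    rw [psum_phi_fst s g _ (by omega), psum_phi_snd s g _ (by omega)]
    exact Ssum_lt_Ssum (V3 j hj1 hjq) hg

/-! ### coverage : every generic cone point has a valid pattern -/

lemma card_filter_val_range {n : ℕ} (a b : ℕ) :
    (Finset.univ.filter fun t : Fin n => a ≤ t.val ∧ t.val < b).card
      = min b n - min a n := by
  rw [Finset.card_filter]
  rw [Fin.sum_univ_eq_sum_range (fun t => if a ≤ t ∧ t < b then 1 else 0) n]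
  rw [← Finset.card_filter]
  have h : (Finset.range n).filter (fun t => a ≤ t ∧ t < b)
      = Finset.Ico (min a n) (min b n) := by
    ext t
    simp [Finset.mem_Ico]
    omega
  rw [h, Nat.card_Ico]

set_option maxHeartbeats 2000000 in
lemma cover (hq : 2 ≤ q) {z w : Fin (i+1) → ℝ}
    (hz : ∀ j, 0 < z j) (hw : ∀ j, 0 < w j)
    (hdist : ∀ a b : Fin (i+1), psum z (a.val+1) ≠ psum w (b.val+1))
    (hzw : (z, w) ∈ KconeQ i q) :
    ∃ s, Valid i q s ∧ ∃ g : Fin (2*i+2) → ℝ, (∀ k, 0 < g k) ∧ phi s g = (z, w) := by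
  classical
  have hK3 : ∀ j, 1 ≤ j → j ≤ i → psum w j ≤ psum z j := hzw.2.2.1
  have hK4 : psum z (i+1) < psum w (i+1) := hzw.2.2.2.1
  have hK5 : ∀ j, 1 ≤ j → j + q ≤ i + 2 → psum z j < psum w (j + q - 2) := hzw.2.2.2.2
  set V : Fin (2*i+2) → ℝ := fun m =>
    if _h : m.val < i+1 then psum z (m.val+1) else psum w (m.val - i) with hV
  have hVz : ∀ m : Fin (2*i+2), m.val < i+1 → V m = psum z (m.val+1) := by
    intro m hm
    rw [hV]
    simp [hm]
  have hVw : ∀ m : Fin (2*i+2), i+1 ≤ m.val → V m = psum w (m.val - i) := by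
    intro m hm
    rw [hV]
    simp [show ¬ m.val < i+1 by omega]
  have hVpos : ∀ m, 0 < V m := by
    intro m
    by_cases hm : m.val < i+1
    · rw [hVz m hm]
      exact psum_pos hz (by omega) (by omega)
    · rw [hVw m (by omega)]
      exact psum_pos hw (by have := m.isLt; omega) (by have := m.isLt; omega)
  have hVinj : Function.Injective V := by
    intro m m' he
    by_cases h1 : m.val < i+1 <;> by_cases h2 : m'.val < i+1
    · rw [hVz m h1, hVz m' h2] at he
      have h3 : m.val + 1 ≤ m'.val + 1 := by
        rw [← psum_le_psum_iff hz (by omega) (by omega)]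
        exact le_of_eq he
      have h4 : m'.val + 1 ≤ m.val + 1 := by
        rw [← psum_le_psum_iff hz (by omega) (by omega)]
        exact le_of_eq he.symm
      exact Fin.ext (by omega)
    · exfalso
      rw [hVz m h1, hVw m' (by omega)] at he
      apply hdist ⟨m.val, h1⟩ ⟨m'.val - (i+1), by have := m'.isLt; omega⟩
      show psum z (m.val+1) = psum w (m'.val - (i+1) + 1)
      rw [show m'.val - (i+1) + 1 = m'.val - i by omega]
      exact he
    · exfalso
      rw [hVw m (by omega), hVz m' h2] at he
      apply hdist ⟨m'.val, h2⟩ ⟨m.val - (i+1), by have := m.isLt; omega⟩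
      show psum z (m'.val+1) = psum w (m.val - (i+1) + 1)
      rw [show m.val - (i+1) + 1 = m.val - i by omega]
      exact he.symm
    · rw [hVw m (by omega), hVw m' (by omega)] at he
      have h3 : m.val - i ≤ m'.val - i := by
        rw [← psum_le_psum_iff hw (by have := m.isLt; omega) (by have := m'.isLt; omega)]
        exact le_of_eq he
      have h4 : m'.val - i ≤ m.val - i := by
        rw [← psum_le_psum_iff hw (by have := m'.isLt; omega) (by have := m.isLt; omega)]
        exact le_of_eq he.symm
      exact Fin.ext (by omega)
  set σ := Tuple.sort V with hσ
  set u : Fin (2*i+2) → ℝ := V ∘ ⇑σ with hu'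
  have hu : StrictMono u := (Tuple.monotone_sort V).strictMono_of_injective
    (hVinj.comp σ.injective)
  set s : Fin (2*i+2) → Bool := fun k => decide ((σ k).val < i+1) with hs
  have hsiff : ∀ k, s k = true ↔ (σ k).val < i+1 := by
    intro k
    rw [hs]
    simp
  have hsle : ∀ a b : Fin (2*i+2), (σ.symm a ≤ σ.symm b ↔ V a ≤ V b) := by
    intro a b
    rw [← hu.le_iff_le]
    show u (σ.symm a) ≤ u (σ.symm b) ↔ _
    rw [hu']
    simp
  have hVleZ : ∀ a b : Fin (2*i+2), a.val < i+1 → b.val < i+1 →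
      (V a ≤ V b ↔ a.val ≤ b.val) := by
    intro a b ha hb
    rw [hVz a ha, hVz b hb, psum_le_psum_iff hz (by omega) (by omega)]
    omega
  have hVleW : ∀ a b : Fin (2*i+2), i+1 ≤ a.val → i+1 ≤ b.val →
      (V a ≤ V b ↔ a.val ≤ b.val) := by
    intro a b ha hb
    rw [hVw a ha, hVw b hb,
      psum_le_psum_iff hw (by have := a.isLt; omega) (by have := b.isLt; omega)]
    omega
  -- the two counting identities
  have keyT : ∀ m : Fin (2*i+2), m.val < i+1 →
      cnt s true ((σ.symm m).val + 1) = m.val + 1 := by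
    intro m hm
    unfold cnt
    have e1 : (Finset.univ.filter fun t : Fin (2*i+2) =>
          t.val < (σ.symm m).val + 1 ∧ s t = true).card
        = (Finset.univ.filter fun m' : Fin (2*i+2) => m'.val < m.val + 1).card := by
      apply Finset.card_bij' (fun t _ => σ t) (fun m' _ => σ.symm m')
      · intro t ht
        rw [Finset.mem_filter] at ht ⊢
        obtain ⟨-, ht1, ht2⟩ := ht
        refine ⟨Finset.mem_univ _, ?_⟩
        have h2 : (σ t).val < i+1 := (hsiff t).1 ht2
        have h3 : σ.symm (σ t) ≤ σ.symm m := by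
          rw [Equiv.symm_apply_apply, Fin.le_def]
          omega
        have h4 : V (σ t) ≤ V m := (hsle _ _).1 h3
        have := (hVleZ _ _ h2 hm).1 h4
        omega
      · intro m' hm'
        rw [Finset.mem_filter] at hm' ⊢
        obtain ⟨-, hm'1⟩ := hm'
        have hm'z : m'.val < i+1 := by omega
        refine ⟨Finset.mem_univ _, ?_, ?_⟩
        · have hle : σ.symm m' ≤ σ.symm m := (hsle _ _).2 ((hVleZ _ _ hm'z hm).2 (by omega))
          rw [Fin.le_def] at hle
          omega
        · rw [hsiff, Equiv.apply_symm_apply]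
          exact hm'z
      · intro t _
        exact Equiv.symm_apply_apply σ t
      · intro m' _
        exact Equiv.apply_symm_apply σ m'
    rw [e1, card_filter_val_lt]
    have := m.isLt
    omega
  have keyF : ∀ m : Fin (2*i+2), i+1 ≤ m.val →
      cnt s false ((σ.symm m).val + 1) = m.val - i := by
    intro m hm
    unfold cnt
    have e1 : (Finset.univ.filter fun t : Fin (2*i+2) =>
          t.val < (σ.symm m).val + 1 ∧ s t = false).card
        = (Finset.univ.filter fun m' : Fin (2*i+2) =>
            i+1 ≤ m'.val ∧ m'.val < m.val + 1).card := by
      apply Finset.card_bij' (fun t _ => σ t) (fun m' _ => σ.symm m')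
      · intro t ht
        rw [Finset.mem_filter] at ht ⊢
        obtain ⟨-, ht1, ht2⟩ := ht
        have h2 : i+1 ≤ (σ t).val := by
          by_contra hcon
          push_neg at hcon
          have := (hsiff t).2 hcon
          rw [ht2] at this
          exact Bool.false_ne_true this
        refine ⟨Finset.mem_univ _, h2, ?_⟩
        have h3 : σ.symm (σ t) ≤ σ.symm m := by
          rw [Equiv.symm_apply_apply, Fin.le_def]
          omega
        have h4 : V (σ t) ≤ V m := (hsle _ _).1 h3
        have := (hVleW _ _ h2 hm).1 h4
        omega
      · intro m' hm'
        rw [Finset.mem_filter] at hm' ⊢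
        obtain ⟨-, hm'1, hm'2⟩ := hm'
        refine ⟨Finset.mem_univ _, ?_, ?_⟩
        · have hle : σ.symm m' ≤ σ.symm m := (hsle _ _).2 ((hVleW _ _ hm'1 hm).2 (by omega))
          rw [Fin.le_def] at hle
          omega
        · rw [hs]
          simp only [decide_eq_false_iff_not, not_lt]
          rw [Equiv.apply_symm_apply]
          exact hm'1
      · intro t _
        exact Equiv.symm_apply_apply σ t
      · intro m' _
        exact Equiv.apply_symm_apply σ m'
    rw [e1, card_filter_val_range]
    have := m.isLt
    omega
  -- balancedness
  have bal : cnt s true (2*i+2) = i+1 := by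
    unfold cnt
    have e1 : (Finset.univ.filter fun t : Fin (2*i+2) => t.val < 2*i+2 ∧ s t = true)
        = Finset.univ.filter fun t : Fin (2*i+2) => (σ t).val < i+1 := by
      apply Finset.filter_congr
      intro t _
      constructor
      · rintro ⟨-, h2⟩
        exact (hsiff t).1 h2
      · intro h
        exact ⟨t.isLt, (hsiff t).2 h⟩
    rw [e1]
    have e2 : (Finset.univ.filter fun t : Fin (2*i+2) => (σ t).val < i+1).card
        = (Finset.univ.filter fun m' : Fin (2*i+2) => m'.val < i+1).card := by
      apply Finset.card_bij' (fun t _ => σ t) (fun m' _ => σ.symm m')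
      · intro t ht
        rw [Finset.mem_filter] at ht ⊢
        exact ⟨Finset.mem_univ _, ht.2⟩
      · intro m' hm'
        rw [Finset.mem_filter] at hm' ⊢
        refine ⟨Finset.mem_univ _, ?_⟩
        rw [Equiv.apply_symm_apply]
        exact hm'.2
      · intro t _
        exact Equiv.symm_apply_apply σ t
      · intro m' _
        exact Equiv.apply_symm_apply σ m'
    rw [e2, card_filter_val_lt]
    omega
  -- the gap vector
  set g : Fin (2*i+2) → ℝ := fun k =>
    u k - (if h : 0 < k.val then u ⟨k.val - 1, by omega⟩ else 0) with hg'
  have hgpos : ∀ k, 0 < g k := by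
    intro k
    rw [hg']
    show 0 < u k - (if h : 0 < k.val then u ⟨k.val - 1, by have := k.isLt; omega⟩ else 0)
    by_cases h : 0 < k.val
    · rw [dif_pos h]
      have hlt : u ⟨k.val - 1, by have := k.isLt; omega⟩ < u k := by
        apply hu
        rw [Fin.lt_def]
        show k.val - 1 < k.val
        omega
      linarith
    · rw [dif_neg h]
      rw [sub_zero, hu']
      exact hVpos (σ k)
  have hpsg : ∀ (K : ℕ) (hK : K < 2*i+2), psum g (K+1) = u ⟨K, hK⟩ := by
    intro K hK
    rw [hg']
    exact ds_psum u K hK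
  -- the Lpos values
  have hLT : ∀ (mv : ℕ) (hmv : mv < i+1),
      Lpos s true (mv+1) = (σ.symm ⟨mv, by omega⟩).val + 1 := by
    intro mv hmv
    have h1 := keyT ⟨mv, by omega⟩ (show mv < i+1 from hmv)
    have hletter : s (σ.symm ⟨mv, by omega⟩) = true := by
      rw [hsiff, Equiv.apply_symm_apply]
      exact hmv
    exact Lpos_eq_of s true (σ.symm ⟨mv, by omega⟩).isLt hletter h1
  have hLF : ∀ (mv : ℕ) (hmv : mv < i+1),
      Lpos s false (mv+1) = (σ.symm ⟨i+1+mv, by omega⟩).val + 1 := by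
    intro mv hmv
    have h1 := keyF ⟨i+1+mv, by omega⟩ (show i+1 ≤ i+1+mv by omega)
    have h1' : cnt s false ((σ.symm ⟨i+1+mv, by omega⟩).val + 1) = mv + 1 := by
      have h2 : (⟨i+1+mv, by omega⟩ : Fin (2*i+2)).val - i = mv + 1 := by
        show i+1+mv - i = mv+1
        omega
      rw [h2] at h1
      exact h1
    have hletter : s (σ.symm ⟨i+1+mv, by omega⟩) = false := by
      show decide ((σ (σ.symm ⟨i+1+mv, by omega⟩)).val < i+1) = false
      rw [Equiv.apply_symm_apply]
      simp only [decide_eq_false_iff_not, not_lt]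
      show i+1 ≤ i+1+mv
      omega
    exact Lpos_eq_of s false (σ.symm ⟨i+1+mv, by omega⟩).isLt hletter h1'
  -- the partial sums of `phi s g` agree with those of `(z,w)`
  have hSz : ∀ (mv : ℕ) (hmv : mv < i+1), Ssum s true (mv+1) g = psum z (mv+1) := by
    intro mv hmv
    rw [Ssum_eq_Pref, Pref_eq_psum, hLT mv hmv, hpsg _ (σ.symm ⟨mv, by omega⟩).isLt]
    show u (σ.symm ⟨mv, by omega⟩) = psum z (mv+1)
    rw [hu']
    show V (σ (σ.symm ⟨mv, by omega⟩)) = psum z (mv+1)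
    rw [Equiv.apply_symm_apply]
    exact hVz ⟨mv, by omega⟩ hmv
  have hSw : ∀ (mv : ℕ) (hmv : mv < i+1), Ssum s false (mv+1) g = psum w (mv+1) := by
    intro mv hmv
    rw [Ssum_eq_Pref, Pref_eq_psum, hLF mv hmv, hpsg _ (σ.symm ⟨i+1+mv, by omega⟩).isLt]
    show u (σ.symm ⟨i+1+mv, by omega⟩) = psum w (mv+1)
    rw [hu']
    show V (σ (σ.symm ⟨i+1+mv, by omega⟩)) = psum w (mv+1)
    rw [Equiv.apply_symm_apply]
    rw [hVw ⟨i+1+mv, by omega⟩ (show i+1 ≤ i+1+mv by omega)]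
    congr 1
    show i+1+mv - i = mv+1
    omega
  have hSz' : ∀ (jj : ℕ) (hjj : jj ≤ i+1), Ssum s true jj g = psum z jj := by
    intro jj hjj
    rcases Nat.eq_zero_or_pos jj with h0 | h0
    · subst h0
      rw [Ssum_zero, psum_zero]
    · obtain ⟨mv, rfl⟩ : ∃ mv, jj = mv+1 := ⟨jj-1, by omega⟩
      exact hSz mv (by omega)
  have hSw' : ∀ (jj : ℕ) (hjj : jj ≤ i+1), Ssum s false jj g = psum w jj := by
    intro jj hjj
    rcases Nat.eq_zero_or_pos jj with h0 | h0
    · subst h0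
      rw [Ssum_zero, psum_zero]
    · obtain ⟨mv, rfl⟩ : ∃ mv, jj = mv+1 := ⟨jj-1, by omega⟩
      exact hSw mv (by omega)
  -- phi s g = (z, w)
  have hc1 : (phi s g).1 = z := by
    funext j
    rw [psum_component (phi s g).1 j, psum_component z j,
      psum_phi_fst s g _ (by omega), psum_phi_fst s g _ (by omega),
      hSz' _ (by omega), hSz' _ (by omega)]
  have hc2 : (phi s g).2 = w := by
    funext j
    rw [psum_component (phi s g).2 j, psum_component w j,
      psum_phi_snd s g _ (by omega), psum_phi_snd s g _ (by omega),
      hSw' _ (by omega), hSw' _ (by omega)]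
  -- validity
  have V1 : ∀ j, 1 ≤ j → j ≤ i → Lpos s false j ≤ Lpos s true j := by
    intro j hj1 hji
    by_contra hcon
    push_neg at hcon
    have := Ssum_lt_Ssum hcon hgpos
    rw [hSz' _ (by omega), hSw' _ (by omega)] at this
    have := hK3 j hj1 hji
    linarith
  have V2 : Lpos s true (i+1) < Lpos s false (i+1) := by
    by_contra hcon
    push_neg at hcon
    have := Ssum_le_Ssum hcon (fun k => le_of_lt (hgpos k))
    rw [hSz' _ (le_refl _), hSw' _ (le_refl _)] at this
    linarith
  have V3 : ∀ j, 1 ≤ j → j + q ≤ i + 2 → Lpos s true j < Lpos s false (j + q - 2) := by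
    intro j hj1 hjq
    by_contra hcon
    push_neg at hcon
    have := Ssum_le_Ssum hcon (fun k => le_of_lt (hgpos k))
    rw [hSz' _ (by omega), hSw' _ (by omega)] at this
    have := hK5 j hj1 hjq
    linarith
  exact ⟨s, ⟨bal, V1, V2, V3⟩, g, hgpos, Prod.ext hc1 hc2⟩

/-! ### last auxiliary facts for the integral computation -/

lemma Lpos_sOf_true {d : Fin (2*i) → Bool} (hd : DyckP i (q-2) d) :
    Lpos (sOf d) true (i+1) = 2*i+1 := by
  obtain ⟨s1, s2, s3, s4⟩ := cnt_sOf_top hd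
  exact Lpos_eq_of (sOf d) true (p := 2*i) (by omega) (sOf_2i d) s1

lemma Lpos_sOf_false {d : Fin (2*i) → Bool} (hd : DyckP i (q-2) d) :
    Lpos (sOf d) false (i+1) = 2*i+2 := by
  obtain ⟨s1, s2, s3, s4⟩ := cnt_sOf_top hd
  exact Lpos_eq_of (sOf d) false (p := 2*i+1) (by omega) (sOf_2i1 d) s4

lemma phi_norm {d : Fin (2*i) → Bool} (hd : DyckP i (q-2) d) (g : Fin (2*i+2) → ℝ) :
    (∑ j, (phi (sOf d) g).1 j) + (∑ j, (phi (sOf d) g).2 j)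
      = ∑ k : Fin (2*i+2), (if k.val < 2*i+1 then (2:ℝ) else 1) * g k := by
  rw [sum_univ_eq_psum, sum_univ_eq_psum,
    psum_phi_fst _ _ _ (le_refl _), psum_phi_snd _ _ _ (le_refl _),
    Ssum_eq_Pref, Ssum_eq_Pref, Lpos_sOf_true hd, Lpos_sOf_false hd]
  unfold Pref
  rw [← Finset.sum_add_distrib]
  apply Finset.sum_congr rfl
  intro k _
  have hk := k.isLt
  by_cases h : k.val < 2*i+1
  · rw [if_pos h, if_pos (by omega), if_pos h]
    ring
  · rw [if_neg h, if_pos (by omega), if_neg h]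
    ring

end Dyck

/-- partial sum as a linear map. -/
def psumL (m : ℕ) (j : ℕ) : (Fin m → ℝ) →ₗ[ℝ] ℝ where
  toFun v := psum v j
  map_add' a b := psum_add a b j
  map_smul' c a := by simpa using psum_smul c a j

end KQ

/-- `C_{i,h}`: the number of Dyck paths of order `i` (from `(0,0)` to `(2i,0)`)
whose height stays in `[0, h]`. -/
noncomputable def boundedDyck (i h : ℕ) : ℕ :=
  Nat.card {s : Fin (2*i) → Bool //
    (∀ j ≤ 2*i, 0 ≤ pathHeight s j ∧ pathHeight s j ≤ (h : ℤ)) ∧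
    pathHeight s (2*i) = 0}

set_option maxHeartbeats 2000000 in
/-- `∫_{K_i(q)} e^{−‖u‖₁} du = C_{i,q−2} / 2^{2i+1}`. -/
theorem integral_over_KconeQ (i q : ℕ) (hq : 2 ≤ q) :
    ∫ u in KconeQ i q, Real.exp (-(∑ j, u.1 j + ∑ j, u.2 j))
      ∂(volume : Measure ((Fin (i+1) → ℝ) × (Fin (i+1) → ℝ)))
      = (boundedDyck i (q - 2) : ℝ) / 2 ^ (2 * i + 1) := by
  classical
  set f : ((Fin (i+1) → ℝ) × (Fin (i+1) → ℝ)) → ℝ :=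
    fun u => Real.exp (-(∑ j, u.1 j + ∑ j, u.2 j)) with hf
  set DS := {d : Fin (2*i) → Bool // KQ.DyckP i (q-2) d} with hDS
  haveI : Fintype DS := Fintype.ofFinite _
  set O : Set (Fin (2*i+2) → ℝ) := Set.univ.pi (fun _ => Set.Ioi (0:ℝ)) with hO
  have hOmeas : MeasurableSet O := MeasurableSet.univ_pi (fun _ => measurableSet_Ioi)
  have hOmem : ∀ g : Fin (2*i+2) → ℝ, g ∈ O ↔ ∀ k, 0 < g k := by
    intro g
    rw [hO, Set.mem_univ_pi]
    simp
  set R : DS → Set ((Fin (i+1) → ℝ) × (Fin (i+1) → ℝ)) :=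
    fun d => KQ.phi (KQ.sOf d.1) '' O with hR
  have hval : ∀ d : DS, KQ.Valid i q (KQ.sOf d.1) := fun d => KQ.valid_of_dyck hq d.2
  have hbal : ∀ d : DS, KQ.cnt (KQ.sOf d.1) true (2*i+2) = i+1 := fun d => (hval d).1
  have hRmeas : ∀ d : DS, MeasurableSet (R d) := by
    intro d
    rw [hR]
    simp only
    rw [KQ.phi_eq_Psi (KQ.sOf d.1) (hbal d)]
    exact (MeasurableEquiv.measurableEmbedding _).measurableSet_image.2 hOmeas
  have hRK : ∀ d : DS, R d ⊆ KconeQ i q := by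
    intro d x hx
    obtain ⟨g, hg, rfl⟩ := hx
    exact KQ.phi_mem_K hq (hval d) (fun k => (hOmem g).1 hg k)
  have hdisj : Pairwise (Function.onFun Disjoint R) := by
    intro d d' hne
    rw [Function.onFun, Set.disjoint_left]
    intro x hx hx'
    obtain ⟨g, hg, hgx⟩ := hx
    obtain ⟨g', hg', hgx'⟩ := hx'
    have hpat := KQ.pattern_unique (hbal d) (hbal d') ((hOmem g).1 hg) ((hOmem g').1 hg')
      (hgx.trans hgx'.symm)
    exact hne (Subtype.ext (KQ.sOf_inj hpat))
  -- the negligible set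
  set N : Set ((Fin (i+1) → ℝ) × (Fin (i+1) → ℝ)) :=
    ((⋃ j : Fin (i+1), {p : (Fin (i+1) → ℝ) × (Fin (i+1) → ℝ) | p.1 j = 0}) ∪
      (⋃ j : Fin (i+1), {p : (Fin (i+1) → ℝ) × (Fin (i+1) → ℝ) | p.2 j = 0})) ∪
    (⋃ a : Fin (i+1), ⋃ b : Fin (i+1),
      {p : (Fin (i+1) → ℝ) × (Fin (i+1) → ℝ) |
        psum p.1 (a.val+1) = psum p.2 (b.val+1)}) with hN
  haveI hHaar : (volume : Measure ((Fin (i+1) → ℝ) × (Fin (i+1) → ℝ))).IsAddHaarMeasure := by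
    rw [MeasureTheory.Measure.volume_eq_prod]
    exact Measure.prod.instIsAddHaarMeasure _ _
  have hkernull : ∀ (φ : ((Fin (i+1) → ℝ) × (Fin (i+1) → ℝ)) →ₗ[ℝ] ℝ)
      (p₀ : (Fin (i+1) → ℝ) × (Fin (i+1) → ℝ)), φ p₀ ≠ 0 →
      volume {p : (Fin (i+1) → ℝ) × (Fin (i+1) → ℝ) | φ p = 0} = 0 := by
    intro φ p₀ hp₀
    have hker : {p : (Fin (i+1) → ℝ) × (Fin (i+1) → ℝ) | φ p = 0}
        = (LinearMap.ker φ : Set ((Fin (i+1) → ℝ) × (Fin (i+1) → ℝ))) := by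
      ext p
      simp [LinearMap.mem_ker]
    rw [hker]
    apply MeasureTheory.Measure.addHaar_submodule
    intro htop
    rw [LinearMap.ker_eq_top] at htop
    rw [htop] at hp₀
    simp at hp₀
  have hNnull : volume N = 0 := by
    rw [hN]
    apply measure_union_null
    · apply measure_union_null
      · apply measure_iUnion_null
        intro j
        exact hkernull ((LinearMap.proj j).comp (LinearMap.fst ℝ _ _))
          (fun _ => (1:ℝ), fun _ => (0:ℝ)) one_ne_zero
      · apply measure_iUnion_null
        intro j
        exact hkernull ((LinearMap.proj j).comp (LinearMap.snd ℝ _ _))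
          (fun _ => (0:ℝ), fun _ => (1:ℝ)) one_ne_zero
    · apply measure_iUnion_null
      intro a
      apply measure_iUnion_null
      intro b
      set φab : ((Fin (i+1) → ℝ) × (Fin (i+1) → ℝ)) →ₗ[ℝ] ℝ :=
        ((KQ.psumL (i+1) (a.val+1)).comp
            (LinearMap.fst ℝ (Fin (i+1) → ℝ) (Fin (i+1) → ℝ)))
          - ((KQ.psumL (i+1) (b.val+1)).comp
            (LinearMap.snd ℝ (Fin (i+1) → ℝ) (Fin (i+1) → ℝ))) with hφab
      have hset : {p : (Fin (i+1) → ℝ) × (Fin (i+1) → ℝ) |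
            psum p.1 (a.val+1) = psum p.2 (b.val+1)}
          = {p : (Fin (i+1) → ℝ) × (Fin (i+1) → ℝ) | φab p = 0} := by
        ext p
        show psum p.1 (a.val+1) = psum p.2 (b.val+1) ↔ φab p = 0
        rw [hφab]
        show psum p.1 (a.val+1) = psum p.2 (b.val+1) ↔
          (KQ.psumL (i+1) (a.val+1)) p.1 - (KQ.psumL (i+1) (b.val+1)) p.2 = 0
        rw [sub_eq_zero]
        exact Iff.rfl
      rw [hset]
      refine hkernull φab (fun _ => (1:ℝ), fun _ => (0:ℝ)) ?_
      rw [hφab]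
      show psum (fun _ : Fin (i+1) => (1:ℝ)) (a.val+1)
        - psum (fun _ : Fin (i+1) => (0:ℝ)) (b.val+1) ≠ 0
      have h1 : 0 < psum (fun _ : Fin (i+1) => (1:ℝ)) (a.val+1) :=
        KQ.psum_pos (fun _ => one_pos) (by omega) (by have := a.isLt; omega)
      have h2 : psum (fun _ : Fin (i+1) => (0:ℝ)) (b.val+1) = 0 := by
        simp [psum]
      rw [h2, sub_zero]
      exact ne_of_gt h1
  -- coverage
  have hcover : KconeQ i q ⊆ (⋃ d : DS, R d) ∪ N := by
    intro x hx
    by_cases hxN : x ∈ N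
    · exact Or.inr hxN
    · left
      rw [hN] at hxN
      have hN1 : ∀ j, x.1 j ≠ 0 := fun j hj =>
        hxN (Or.inl (Or.inl (Set.mem_iUnion.2 ⟨j, hj⟩)))
      have hN2 : ∀ j, x.2 j ≠ 0 := fun j hj =>
        hxN (Or.inl (Or.inr (Set.mem_iUnion.2 ⟨j, hj⟩)))
      have hN3 : ∀ a b : Fin (i+1), psum x.1 (a.val+1) ≠ psum x.2 (b.val+1) :=
        fun a b hab => hxN (Or.inr (Set.mem_iUnion.2 ⟨a, Set.mem_iUnion.2 ⟨b, hab⟩⟩))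
      have hz : ∀ j, 0 < x.1 j := fun j => lt_of_le_of_ne (hx.1 j) (Ne.symm (hN1 j))
      have hw : ∀ j, 0 < x.2 j := fun j => lt_of_le_of_ne (hx.2.1 j) (Ne.symm (hN2 j))
      obtain ⟨s, hvalid, g, hgpos, hphig⟩ := KQ.cover hq hz hw hN3
        (by rw [Prod.mk.eta]; exact hx)
      obtain ⟨d, hd, hsd⟩ := KQ.dyck_of_valid hq hvalid
      refine Set.mem_iUnion.2 ⟨⟨d, hd⟩, ?_⟩
      rw [hR]
      exact ⟨g, (hOmem g).2 hgpos, by rw [hsd, hphig, Prod.mk.eta]⟩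
  have hsub : (⋃ d : DS, R d) ⊆ KconeQ i q := Set.iUnion_subset hRK
  have hae : KconeQ i q =ᵐ[volume] ⋃ d : DS, R d := by
    rw [MeasureTheory.ae_eq_set]
    constructor
    · refine measure_mono_null ?_ hNnull
      intro x hx
      rcases hcover hx.1 with h | h
      · exact absurd h hx.2
      · exact h
    · rw [Set.diff_eq_empty.2 hsub]
      exact measure_empty
  -- integrability on the union
  have hKO : KconeQ i q ⊆ (Set.univ.pi fun _ : Fin (i+1) => Set.Ici (0:ℝ)) ×ˢ
      (Set.univ.pi fun _ : Fin (i+1) => Set.Ici (0:ℝ)) := by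
    intro x hx
    exact ⟨Set.mem_univ_pi.2 (fun j => hx.1 j), Set.mem_univ_pi.2 (fun j => hx.2.1 j)⟩
  have hIntBig : MeasureTheory.IntegrableOn f
      ((Set.univ.pi fun _ : Fin (i+1) => Set.Ici (0:ℝ)) ×ˢ
        (Set.univ.pi fun _ : Fin (i+1) => Set.Ici (0:ℝ))) := by
    rw [← MeasureTheory.integrable_indicator_iff
      ((MeasurableSet.univ_pi fun _ => measurableSet_Ici).prod
        (MeasurableSet.univ_pi fun _ => measurableSet_Ici))]
    have heqf : ((Set.univ.pi fun _ : Fin (i+1) => Set.Ici (0:ℝ)) ×ˢ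
          (Set.univ.pi fun _ : Fin (i+1) => Set.Ici (0:ℝ))).indicator f
        = fun p => (∏ j : Fin (i+1),
              (Set.Ici (0:ℝ)).indicator (fun x => Real.exp (-x)) (p.1 j))
            * (∏ j : Fin (i+1),
              (Set.Ici (0:ℝ)).indicator (fun x => Real.exp (-x)) (p.2 j)) := by
      funext p
      by_cases hp : p ∈ (Set.univ.pi fun _ : Fin (i+1) => Set.Ici (0:ℝ)) ×ˢ
          (Set.univ.pi fun _ : Fin (i+1) => Set.Ici (0:ℝ))
      · rw [Set.indicator_of_mem hp]
        obtain ⟨hp1, hp2⟩ := hp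
        show Real.exp (-(∑ j, p.1 j + ∑ j, p.2 j)) = _
        have e1 : Real.exp (-(∑ j, p.1 j + ∑ j, p.2 j))
            = (∏ j, Real.exp (-(p.1 j))) * (∏ j, Real.exp (-(p.2 j))) := by
          rw [neg_add, Real.exp_add, ← Finset.sum_neg_distrib, ← Finset.sum_neg_distrib,
            Real.exp_sum, Real.exp_sum]
        rw [e1]
        congr 1
        · apply Finset.prod_congr rfl
          intro j _
          rw [Set.indicator_of_mem (Set.mem_univ_pi.1 hp1 j)]
        · apply Finset.prod_congr rfl
          intro j _
          rw [Set.indicator_of_mem (Set.mem_univ_pi.1 hp2 j)]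
      · rw [Set.indicator_of_notMem hp]
        symm
        rw [Set.mem_prod] at hp
        by_cases h1 : p.1 ∈ Set.univ.pi fun _ : Fin (i+1) => Set.Ici (0:ℝ)
        · have h2 : p.2 ∉ Set.univ.pi fun _ : Fin (i+1) => Set.Ici (0:ℝ) :=
            fun h => hp ⟨h1, h⟩
          rw [Set.mem_univ_pi] at h2
          push_neg at h2
          obtain ⟨j, hj⟩ := h2
          exact mul_eq_zero_of_right _
            (Finset.prod_eq_zero (Finset.mem_univ j) (Set.indicator_of_notMem hj _))
        · rw [Set.mem_univ_pi] at h1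
          push_neg at h1
          obtain ⟨j, hj⟩ := h1
          exact mul_eq_zero_of_left
            (Finset.prod_eq_zero (Finset.mem_univ j) (Set.indicator_of_notMem hj _)) _
    rw [heqf]
    have hfac : MeasureTheory.Integrable
        (fun x : ℝ => (Set.Ici (0:ℝ)).indicator (fun y => Real.exp (-y)) x) := by
      rw [MeasureTheory.integrable_indicator_iff measurableSet_Ici]
      have hIoi : MeasureTheory.IntegrableOn (fun y : ℝ => Real.exp (-y)) (Set.Ioi 0) := by
        have := exp_neg_integrableOn_Ioi 0 (b := 1) one_pos
        simpa using this
      exact hIoi.congr_set_ae (MeasureTheory.Ioi_ae_eq_Ici).symm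
    have hF : MeasureTheory.Integrable (fun zz : Fin (i+1) → ℝ =>
        ∏ j, (Set.Ici (0:ℝ)).indicator (fun y => Real.exp (-y)) (zz j)) :=
      MeasureTheory.Integrable.fintype_prod (fun _ => hfac)
    rw [MeasureTheory.Measure.volume_eq_prod]
    exact hF.mul_prod hF
  have hIntU : MeasureTheory.IntegrableOn f (⋃ d : DS, R d) :=
    hIntBig.mono_set (hsub.trans hKO)
  -- the per-region integral
  have hterm : ∀ d : DS, (∫ x in R d, f x) = ((2:ℝ)⁻¹) ^ (2*i+1) := by
    intro d
    rw [hR]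
    simp only
    rw [KQ.phi_eq_Psi (KQ.sOf d.1) (hbal d)]
    rw [(KQ.mp_Psi (KQ.sOf d.1) (hbal d)).setIntegral_image_emb
      (MeasurableEquiv.measurableEmbedding _) f O]
    have hfg : ∀ g : Fin (2*i+2) → ℝ, f (KQ.Psi (KQ.sOf d.1) (hbal d) g)
        = ∏ k : Fin (2*i+2),
            Real.exp (-((if k.val < 2*i+1 then (2:ℝ) else 1) * g k)) := by
      intro g
      rw [← KQ.phi_eq_Psi (KQ.sOf d.1) (hbal d), hf]
      show Real.exp (-(∑ j, (KQ.phi (KQ.sOf d.1) g).1 j + ∑ j, (KQ.phi (KQ.sOf d.1) g).2 j))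
        = _
      rw [KQ.phi_norm d.2 g]
      rw [show -(∑ k : Fin (2*i+2), (if k.val < 2*i+1 then (2:ℝ) else 1) * g k)
          = ∑ k : Fin (2*i+2), -((if k.val < 2*i+1 then (2:ℝ) else 1) * g k) by
        rw [Finset.sum_neg_distrib]]
      exact Real.exp_sum _ _
    rw [show (fun g => f (KQ.Psi (KQ.sOf d.1) (hbal d) g))
        = fun g : Fin (2*i+2) → ℝ => ∏ k : Fin (2*i+2),
            Real.exp (-((if k.val < 2*i+1 then (2:ℝ) else 1) * g k)) from funext hfg]
    rw [← MeasureTheory.integral_indicator hOmeas]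
    have hind : O.indicator (fun g : Fin (2*i+2) → ℝ => ∏ k : Fin (2*i+2),
          Real.exp (-((if k.val < 2*i+1 then (2:ℝ) else 1) * g k)))
        = fun g : Fin (2*i+2) → ℝ => ∏ k : Fin (2*i+2),
            (Set.Ioi (0:ℝ)).indicator
              (fun y => Real.exp (-((if k.val < 2*i+1 then (2:ℝ) else 1) * y))) (g k) := by
      funext g
      by_cases hg : g ∈ O
      · rw [Set.indicator_of_mem hg]
        apply Finset.prod_congr rfl
        intro k _
        rw [Set.indicator_of_mem (Set.mem_univ_pi.1 hg k)]
      · rw [Set.indicator_of_notMem hg]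
        symm
        rw [hO, Set.mem_univ_pi] at hg
        push_neg at hg
        obtain ⟨k, hk⟩ := hg
        exact Finset.prod_eq_zero (Finset.mem_univ k) (Set.indicator_of_notMem hk _)
    rw [hind]
    rw [MeasureTheory.integral_fintype_prod_volume_eq_prod (ι := Fin (2*i+2))
      (f := fun k x => (Set.Ioi (0:ℝ)).indicator
        (fun y => Real.exp (-((if k.val < 2*i+1 then (2:ℝ) else 1) * y))) x)]
    have hfac : ∀ k : Fin (2*i+2),
        (∫ x : ℝ, (Set.Ioi (0:ℝ)).indicator
          (fun y => Real.exp (-((if k.val < 2*i+1 then (2:ℝ) else 1) * y))) x)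
        = (if k.val < 2*i+1 then (2:ℝ) else 1)⁻¹ := by
      intro k
      rw [MeasureTheory.integral_indicator measurableSet_Ioi]
      have hc : (0:ℝ) < (if k.val < 2*i+1 then (2:ℝ) else 1) := by
        split_ifs
        · norm_num
        · norm_num
      have hcm := MeasureTheory.integral_comp_mul_left_Ioi
        (fun x => Real.exp (-x)) 0 hc
      rw [mul_zero, integral_exp_neg_Ioi, neg_zero, Real.exp_zero, smul_eq_mul, mul_one] at hcm
      exact hcm
    rw [Finset.prod_congr rfl (fun k _ => hfac k)]
    have hsplit : ∀ k : Fin (2*i+2), (if k.val < 2*i+1 then (2:ℝ) else 1)⁻¹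
        = if k.val < 2*i+1 then (2:ℝ)⁻¹ else 1 := by
      intro k
      split_ifs
      · rfl
      · exact inv_one
    rw [Finset.prod_congr rfl (fun k _ => hsplit k), ← Finset.prod_filter,
      Finset.prod_const, KQ.card_filter_val_lt]
    congr 1
    omega
  -- assemble
  rw [MeasureTheory.setIntegral_congr_set hae,
    MeasureTheory.integral_iUnion hRmeas hdisj hIntU, tsum_fintype,
    Finset.sum_congr rfl (fun d _ => hterm d), Finset.sum_const, Finset.card_univ]
  have hcard : Fintype.card DS = boundedDyck i (q-2) := by
    have h1 : boundedDyck i (q-2) = Nat.card DS := rfl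
    rw [h1, Nat.card_eq_fintype_card]
  rw [nsmul_eq_mul, hcard, div_eq_mul_inv, ← inv_pow]
end
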